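/- arXiv:1907.11120 — 3 statements merged into one kernel-verified Lean document; each statement's English description precedes it below -/
import Mathlib

section
/- Let Γ ⊆ Sym({1,…,n}) be a permutation group and let d be odd. If v, v̄ ∈ S_d(Γ) are irreducible, not equivalent, and their arrangement spaces are not orthogonal subspaces of ℝ^n, then v and v̄ are deformation equivalent. -/
open Matrix

/-- The matrix of an arrangement of `n` points in `ℝ^d`: the `i`-th row is the point `v i`. -/
def arrMat {n d : ℕ} (v : Fin n → Fin d → ℝ) : Matrix (Fin n) (Fin d) ℝ := Matrix.of v

/-- An arrangement is normalized if `MᵀM` is the identity matrix. -/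
def IsNormalized {n d : ℕ} (v : Fin n → Fin d → ℝ) : Prop :=
  (arrMat v)ᵀ * arrMat v = 1

/-- The arrangement space of `v`: the column span of its matrix, a subspace of `ℝ^n`. -/
def arrSpace {n d : ℕ} (v : Fin n → Fin d → ℝ) : Submodule ℝ (Fin n → ℝ) :=
  Submodule.span ℝ (Set.range (arrMat v)ᵀ)

/-- `detPair v w = det (M_wᵀ * M_v)`, i.e. `det(v, w̄) = det(M̄ᵀ M)` with `w` playing `v̄`. -/
noncomputable def detPair {n d : ℕ} (v w : Fin n → Fin d → ℝ) : ℝ :=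
  ((arrMat w)ᵀ * arrMat v).det

/-- Two subspaces `U, W ⊆ ℝ^n` are orthogonal if `⟨u, w⟩ = 0` for all `u ∈ U`, `w ∈ W`. -/
def OrthSpaces {n : ℕ} (U W : Submodule ℝ (Fin n → ℝ)) : Prop :=
  ∀ u ∈ U, ∀ w ∈ W, u ⬝ᵥ w = 0

/-- Arrangements are equivalent if related by an invertible linear map `X`. -/
def AreEquivalent {n d : ℕ} (v w : Fin n → Fin d → ℝ) : Prop :=
  ∃ X : Matrix (Fin d) (Fin d) ℝ, X.det ≠ 0 ∧ ∀ i, X.mulVec (v i) = w i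

/-- Arrangements are positively equivalent if related by a linear map of positive determinant. -/
def PosEquivalent {n d : ℕ} (v w : Fin n → Fin d → ℝ) : Prop :=
  ∃ X : Matrix (Fin d) (Fin d) ℝ, 0 < X.det ∧ ∀ i, X.mulVec (v i) = w i

/-- `T : Γ → O(ℝ^d)` is a representation: orthogonal values and multiplicative. -/
def IsRep {n d : ℕ} (Γ : Subgroup (Equiv.Perm (Fin n)))
    (T : Γ → Matrix (Fin d) (Fin d) ℝ) : Prop :=
  (∀ φ, (T φ)ᵀ * T φ = 1) ∧ (∀ φ ψ, T (φ * ψ) = T φ * T ψ)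

/-- `T` is a representation of the arrangement `v`: `T_φ v_i = v_{φ(i)}`. -/
def IsRepOf {n d : ℕ} (Γ : Subgroup (Equiv.Perm (Fin n)))
    (T : Γ → Matrix (Fin d) (Fin d) ℝ) (v : Fin n → Fin d → ℝ) : Prop :=
  IsRep Γ T ∧ ∀ (φ : Γ) (i : Fin n), (T φ).mulVec (v i) = v (φ.val i)

/-- `v` is a `Γ`-arrangement if it has a representation. -/
def IsGammaArr {n d : ℕ} (Γ : Subgroup (Equiv.Perm (Fin n)))
    (v : Fin n → Fin d → ℝ) : Prop :=
  ∃ T : Γ → Matrix (Fin d) (Fin d) ℝ, IsRepOf Γ T v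

/-- A representation is irreducible if the only invariant subspaces of `ℝ^d` are `⊥` and `⊤`. -/
def IrredRep {n d : ℕ} (Γ : Subgroup (Equiv.Perm (Fin n)))
    (T : Γ → Matrix (Fin d) (Fin d) ℝ) : Prop :=
  ∀ W : Submodule ℝ (Fin d → ℝ), (∀ (φ : Γ), ∀ x ∈ W, (T φ).mulVec x ∈ W) → W = ⊥ ∨ W = ⊤

/-- Representations are isomorphic: an invertible equivariant map exists. -/
def IsoReps {n d : ℕ} (Γ : Subgroup (Equiv.Perm (Fin n)))
    (T T' : Γ → Matrix (Fin d) (Fin d) ℝ) : Prop :=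
  ∃ R : Matrix (Fin d) (Fin d) ℝ, R.det ≠ 0 ∧ ∀ φ, R * T φ = T' φ * R

/-- Representations are positively isomorphic: an equivariant map with positive determinant. -/
def PosIsoReps {n d : ℕ} (Γ : Subgroup (Equiv.Perm (Fin n)))
    (T T' : Γ → Matrix (Fin d) (Fin d) ℝ) : Prop :=
  ∃ R : Matrix (Fin d) (Fin d) ℝ, 0 < R.det ∧ ∀ φ, R * T φ = T' φ * R

/-- `S_d(Γ)`: the set of normalized `Γ`-arrangements of `n` points in `ℝ^d`. -/
def SdSet (n d : ℕ) (Γ : Subgroup (Equiv.Perm (Fin n))) : Set (Fin n → Fin d → ℝ) :=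
  {v | IsNormalized v ∧ IsGammaArr Γ v}

/-- Deformation equivalence: a continuous path in `S_d(Γ)` from `v` to `w`. -/
def DeformEquiv {n d : ℕ} (Γ : Subgroup (Equiv.Perm (Fin n)))
    (v w : Fin n → Fin d → ℝ) : Prop :=
  ∃ c : ℝ → (Fin n → Fin d → ℝ), ContinuousOn c (Set.Icc 0 1) ∧
    (∀ t ∈ Set.Icc (0:ℝ) 1, c t ∈ SdSet n d Γ) ∧ c 0 = v ∧ c 1 = w

/-- `v` is flexible if it can be deformed into some non-equivalent arrangement. -/
def Flexible {n d : ℕ} (Γ : Subgroup (Equiv.Perm (Fin n))) (v : Fin n → Fin d → ℝ) : Prop :=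
  ∃ w : Fin n → Fin d → ℝ, DeformEquiv Γ v w ∧ ¬ AreEquivalent v w

/-- A subspace `W ⊆ ℝ^n` is `Γ`-invariant (under the permutation action). -/
def GammaInvariant {n : ℕ} (Γ : Subgroup (Equiv.Perm (Fin n)))
    (W : Submodule ℝ (Fin n → ℝ)) : Prop :=
  ∀ (φ : Γ), ∀ x ∈ W, (fun i => x (φ.val⁻¹ i)) ∈ W




noncomputable section

/-- Reflection matrix in the hyperplane orthogonal to `u`. -/
def reflMat {d : ℕ} (u : Fin d → ℝ) : Matrix (Fin d) (Fin d) ℝ :=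
  1 - (2 : ℝ) • Matrix.vecMulVec u u

lemma reflMat_transpose {d : ℕ} (u : Fin d → ℝ) : (reflMat u)ᵀ = reflMat u := by
  ext i j
  simp [reflMat, Matrix.transpose_apply, Matrix.one_apply, Matrix.vecMulVec_apply, eq_comm,
    mul_comm]

lemma vecMulVec_mul_vecMulVec {d : ℕ} (u v : Fin d → ℝ) :
    vecMulVec u v * vecMulVec v u = (v ⬝ᵥ v) • vecMulVec u u := by
  ext i j
  simp only [Matrix.mul_apply, Matrix.vecMulVec_apply, Matrix.smul_apply, smul_eq_mul,
    dotProduct]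
  rw [Finset.sum_mul]
  congr 1
  ext k
  ring

lemma reflMat_mul_self {d : ℕ} {u : Fin d → ℝ} (hu : u ⬝ᵥ u = 1) :
    reflMat u * reflMat u = 1 := by
  simp only [reflMat, Matrix.sub_mul, Matrix.mul_sub, Matrix.one_mul, Matrix.mul_one,
    Matrix.smul_mul, Matrix.mul_smul, vecMulVec_mul_vecMulVec, hu, one_smul, smul_smul]
  module

lemma reflMat_neg {d : ℕ} (u : Fin d → ℝ) : reflMat (-u) = reflMat u := by
  ext i j
  simp [reflMat, Matrix.vecMulVec_apply]

lemma reflMat_orth {d : ℕ} {u : Fin d → ℝ} (hu : u ⬝ᵥ u = 1) :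
    (reflMat u)ᵀ * reflMat u = 1 := by
  rw [reflMat_transpose, reflMat_mul_self hu]

lemma det_reflMat {d : ℕ} {u : Fin d → ℝ} (hu : u ⬝ᵥ u = 1) :
    (reflMat u).det = -1 := by
  have : reflMat u = 1 + Matrix.replicateCol (Fin 1) ((-2 : ℝ) • u) * Matrix.replicateRow (Fin 1) u := by
    ext i j
    simp [reflMat, Matrix.mul_apply, Matrix.vecMulVec_apply, Matrix.replicateCol, Matrix.replicateRow]
    ring
  rw [this, show Matrix.det (1 + Matrix.replicateCol (Fin 1) ((-2 : ℝ) • u) * Matrix.replicateRow (Fin 1) u :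
    Matrix (Fin d) (Fin d) ℝ)
    = 1 + u ⬝ᵥ ((-2 : ℝ) • u) from Matrix.det_one_add_replicateCol_mul_replicateRow _ _]
  rw [dotProduct_smul] at *
  simp [hu]
  norm_num

end

noncomputable section
lemma vecMulVec_mulVec {d : ℕ} (u v : Fin d → ℝ) (x : Fin d → ℝ) :
    vecMulVec u v *ᵥ x = (v ⬝ᵥ x) • u := by
  ext i
  simp only [Matrix.mulVec, Matrix.vecMulVec_apply, dotProduct, Pi.smul_apply, smul_eq_mul]
  rw [Finset.sum_mul]
  congr 1
  ext k
  ring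

lemma reflMat_mulVec {d : ℕ} (u x : Fin d → ℝ) :
    reflMat u *ᵥ x = x - (2 * (u ⬝ᵥ x)) • u := by
  simp only [reflMat, Matrix.sub_mulVec, Matrix.one_mulVec, Matrix.smul_mulVec,
    _root_.vecMulVec_mulVec, smul_smul]

lemma continuous_reflMat {d : ℕ} : Continuous fun u : Fin d → ℝ => reflMat u := by
  apply continuous_matrix
  intro i j
  simp only [reflMat, Matrix.sub_apply, Matrix.smul_apply, Matrix.one_apply,
    Matrix.vecMulVec_apply, smul_eq_mul]
  fun_prop

/-- `R` is connected to `1` by a continuous path of orthogonal matrices. -/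
def OPath {d : ℕ} (R : Matrix (Fin d) (Fin d) ℝ) : Prop :=
  ∃ γ : ℝ → Matrix (Fin d) (Fin d) ℝ, Continuous γ ∧ (∀ t, (γ t)ᵀ * γ t = 1) ∧
    γ 0 = 1 ∧ γ 1 = R

lemma OPath.one {d : ℕ} : OPath (1 : Matrix (Fin d) (Fin d) ℝ) :=
  ⟨fun _ => 1, continuous_const, fun _ => by simp, rfl, rfl⟩

lemma OPath.mul {d : ℕ} {R S : Matrix (Fin d) (Fin d) ℝ} (hR : OPath R) (hS : OPath S) :
    OPath (R * S) := by
  obtain ⟨γ, hγc, hγo, hγ0, hγ1⟩ := hR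
  obtain ⟨δ, hδc, hδo, hδ0, hδ1⟩ := hS
  refine ⟨fun t => γ t * δ t, by fun_prop, fun t => ?_, by simp [hγ0, hδ0], by simp [hγ1, hδ1]⟩
  rw [Matrix.transpose_mul, Matrix.mul_assoc, ← Matrix.mul_assoc (γ t)ᵀ, hγo, Matrix.one_mul,
    hδo]

lemma dot_gt_neg_one {d : ℕ} {v σ : Fin d → ℝ} (hv : v ⬝ᵥ v = 1) (hσ : σ ⬝ᵥ σ = 1)
    (hne : σ ≠ -v) : -1 < v ⬝ᵥ σ := by
  have h0 : (v + σ) ⬝ᵥ (v + σ) ≠ 0 := by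
    intro h
    exact hne (eq_neg_of_add_eq_zero_right ((dotProduct_self_eq_zero).mp h))
  have h1 : 0 ≤ (v + σ) ⬝ᵥ (v + σ) := by
    simp only [dotProduct]
    exact Finset.sum_nonneg fun i _ => mul_self_nonneg _
  have h2 : (v + σ) ⬝ᵥ (v + σ) = 2 + 2 * (v ⬝ᵥ σ) := by
    simp only [add_dotProduct, dotProduct_add, hv, hσ,
      dotProduct_comm σ v]
    ring
  nlinarith [lt_of_le_of_ne h1 (Ne.symm h0)]

lemma OPath.pair {d : ℕ} {u v : Fin d → ℝ} (hu : u ⬝ᵥ u = 1) (hv : v ⬝ᵥ v = 1) :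
    OPath (reflMat u * reflMat v) := by
  set σ : Fin d → ℝ := if u = -v then v else u with hσdef
  have hσ : σ ⬝ᵥ σ = 1 := by
    rw [hσdef]; split
    · exact hv
    · exact hu
  have hreflσ : reflMat σ = reflMat u := by
    rw [hσdef]; split
    · rename_i h; rw [h, reflMat_neg]
    · rfl
  have hσne : σ ≠ -v := by
    rw [hσdef]; split
    · rename_i h
      intro hc
      have h2 : v ⬝ᵥ v = -(v ⬝ᵥ v) := by
        nth_rewrite 2 [hc]
        rw [dotProduct_neg]
      rw [hv] at h2
      linarith
    · rename_i h; exact h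
  have hr : -1 < v ⬝ᵥ σ := dot_gt_neg_one hv hσ hσne
  -- the interpolation
  set st : ℝ → ℝ := fun t => (Set.projIcc (0:ℝ) 1 zero_le_one t : ℝ) with hst
  have hstc : Continuous st := continuous_subtype_val.comp (continuous_projIcc)
  have hst0 : st 0 = 0 := by simp [hst]
  have hst1 : st 1 = 1 := by simp [hst]
  have hstmem : ∀ t, 0 ≤ st t ∧ st t ≤ 1 := fun t => ⟨(Set.projIcc 0 1 zero_le_one t).2.1,
    (Set.projIcc 0 1 zero_le_one t).2.2⟩
  set q : ℝ → (Fin d → ℝ) := fun t => (1 - st t) • v + st t • σ with hq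
  have hqq : ∀ t, q t ⬝ᵥ q t = (1 - st t)^2 + (st t)^2 + 2*(st t)*(1 - st t)*(v ⬝ᵥ σ) := by
    intro t
    simp only [hq, add_dotProduct, dotProduct_add, smul_dotProduct,
      dotProduct_smul, hv, hσ, dotProduct_comm σ v, smul_eq_mul]
    ring
  have hqpos : ∀ t, 0 < q t ⬝ᵥ q t := by
    intro t
    rw [hqq t]
    obtain ⟨h0, h1⟩ := hstmem t
    have h3 : (0:ℝ) < 1 + v ⬝ᵥ σ := by linarith
    have key : (1 - st t)^2 + (st t)^2 + 2*(st t)*(1 - st t)*(v ⬝ᵥ σ)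
        = (1 - 2*st t)^2 + 2*((st t)*(1 - st t))*(1 + (v ⬝ᵥ σ)) := by ring
    rw [key]
    by_cases hP : st t * (1 - st t) = 0
    · have h4 : (1 - 2*st t)^2 = 1 := by
        rcases mul_eq_zero.mp hP with h | h
        · rw [h]; norm_num
        · have : st t = 1 := by linarith
          rw [this]; norm_num
      rw [hP, h4]; norm_num
    · have hPpos : 0 < st t * (1 - st t) :=
        lt_of_le_of_ne (mul_nonneg h0 (by linarith)) (Ne.symm hP)
      nlinarith [sq_nonneg (1 - 2*st t), mul_pos hPpos h3]
  set p : ℝ → (Fin d → ℝ) := fun t => (Real.sqrt (q t ⬝ᵥ q t))⁻¹ • q t with hp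
  have hpunit : ∀ t, p t ⬝ᵥ p t = 1 := by
    intro t
    simp only [hp, smul_dotProduct, dotProduct_smul, smul_eq_mul]
    rw [← mul_assoc, ← mul_inv, Real.mul_self_sqrt (hqpos t).le]
    exact inv_mul_cancel₀ (hqpos t).ne'
  have hqc : Continuous q := by fun_prop
  have hdot : Continuous fun t => q t ⬝ᵥ q t := by
    simp only [dotProduct]
    exact continuous_finset_sum _ fun i _ =>
      ((continuous_apply i).comp hqc).mul ((continuous_apply i).comp hqc)
  have hpc : Continuous p := by
    apply Continuous.smul (f := fun t => (Real.sqrt (q t ⬝ᵥ q t))⁻¹) _ hqc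
    apply Continuous.inv₀
    · exact (Real.continuous_sqrt).comp hdot
    · intro t
      exact ne_of_gt (Real.sqrt_pos.mpr (hqpos t))
  have hp0 : p 0 = v := by
    simp [hp, hq, hst0, hv, Real.sqrt_one]
  have hp1 : p 1 = σ := by
    simp [hp, hq, hst1, hσ, Real.sqrt_one]
  refine ⟨fun t => reflMat u * reflMat (p (1 - t)),
    continuous_const.mul (continuous_reflMat.comp (hpc.comp (by fun_prop))),
    fun t => ?_, ?_, ?_⟩
  · rw [Matrix.transpose_mul, Matrix.mul_assoc, ← Matrix.mul_assoc (reflMat u)ᵀ,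
      reflMat_orth hu, Matrix.one_mul, reflMat_orth (hpunit _)]
  · simp only [sub_zero, hp1, hreflσ]
    exact reflMat_mul_self hu
  · simp only [sub_self, hp0]

lemma OPath.list {d : ℕ} : ∀ (k : ℕ) (l : List (Fin d → ℝ)), l.length = k →
    (∀ u ∈ l, u ⬝ᵥ u = 1) → Even k → OPath ((l.map reflMat).prod) := by
  intro k
  induction k using Nat.strong_induction_on with
  | _ k ih =>
    intro l hlen hunit hev
    match l with
    | [] => simpa using OPath.one
    | [x] =>
      exfalso
      simp only [List.length_singleton] at hlen
      rcases hev with ⟨m, hm⟩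
      omega
    | x :: y :: l' =>
      simp only [List.length_cons] at hlen
      have : OPath ((l'.map reflMat).prod) := by
        apply ih (l'.length) (by omega) l' rfl
        · intro u hu; exact hunit u (by simp [hu])
        · rcases hev with ⟨m, hm⟩
          exact ⟨m - 1, by omega⟩
      simpa [Matrix.mul_assoc] using
        (OPath.pair (hunit x (by simp)) (hunit y (by simp))).mul this

open scoped RealInnerProductSpace in
lemma matrix_to_isometry {d : ℕ} (R : Matrix (Fin d) (Fin d) ℝ) (hR : Rᵀ * R = 1) :
    ∃ φ : EuclideanSpace ℝ (Fin d) ≃ₗᵢ[ℝ] EuclideanSpace ℝ (Fin d),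
      ∀ x : EuclideanSpace ℝ (Fin d),
        WithLp.equiv 2 (Fin d → ℝ) (φ x) = R *ᵥ (WithLp.equiv 2 (Fin d → ℝ) x) := by
  have hR' : R * Rᵀ = 1 := mul_eq_one_comm.mp hR
  have key : ∀ (A B : Matrix (Fin d) (Fin d) ℝ), A * B = 1 →
      (Matrix.toEuclideanLin A) ∘ₗ (Matrix.toEuclideanLin B) = LinearMap.id := by
    intro A B hAB
    apply LinearMap.ext
    intro x
    simp only [LinearMap.comp_apply, Matrix.toEuclideanLin_apply, LinearMap.id_apply,
      Equiv.apply_symm_apply, Matrix.mulVec_mulVec, hAB, Matrix.one_mulVec]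
  set e : EuclideanSpace ℝ (Fin d) ≃ₗ[ℝ] EuclideanSpace ℝ (Fin d) :=
    LinearEquiv.ofLinear (Matrix.toEuclideanLin R) (Matrix.toEuclideanLin Rᵀ)
      (key R Rᵀ hR') (key Rᵀ R hR) with he
  have heapp : ∀ x, WithLp.equiv 2 (Fin d → ℝ) (e x) = R *ᵥ (WithLp.equiv 2 (Fin d → ℝ) x) := by
    intro x
    simp only [he, LinearEquiv.ofLinear_apply, Matrix.toEuclideanLin_apply,
      Equiv.apply_symm_apply]
    rfl
  have hinner : ∀ x y : EuclideanSpace ℝ (Fin d), ⟪e x, e y⟫ = ⟪x, y⟫ := by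
    intro x y
    rw [EuclideanSpace.inner_eq_star_dotProduct, EuclideanSpace.inner_eq_star_dotProduct]
    simp only [star_trivial]
    rw [show (e y).ofLp = R *ᵥ y.ofLp from heapp y, show (e x).ofLp = R *ᵥ x.ofLp from heapp x]
    rw [Matrix.dotProduct_mulVec, ← Matrix.mulVec_transpose, Matrix.mulVec_mulVec, hR,
      Matrix.one_mulVec]
  exact ⟨e.isometryOfInner hinner, fun x => heapp x⟩

open scoped RealInnerProductSpace in
lemma reflection_matrix {d : ℕ} (z : EuclideanSpace ℝ (Fin d)) (hz : z ≠ 0) :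
    ∃ u : Fin d → ℝ, u ⬝ᵥ u = 1 ∧ ∀ x : EuclideanSpace ℝ (Fin d),
      WithLp.equiv 2 (Fin d → ℝ) ((Submodule.reflection (ℝ ∙ z)ᗮ) x)
        = reflMat u *ᵥ (WithLp.equiv 2 (Fin d → ℝ) x) := by
  set zh : EuclideanSpace ℝ (Fin d) := ‖z‖⁻¹ • z with hzh
  have hnz : ‖z‖ ≠ 0 := norm_ne_zero_iff.mpr hz
  have hzh1 : ‖zh‖ = 1 := norm_smul_inv_norm hz
  set u : Fin d → ℝ := WithLp.equiv 2 (Fin d → ℝ) zh with hu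
  have hdot : ∀ y : EuclideanSpace ℝ (Fin d),
      ⟪zh, y⟫ = u ⬝ᵥ (WithLp.equiv 2 (Fin d → ℝ)) y := by
    intro y
    rw [EuclideanSpace.inner_eq_star_dotProduct]
    simp [hu, star_trivial]
    exact dotProduct_comm _ _
  have huu : u ⬝ᵥ u = 1 := by
    have := hdot zh
    rw [real_inner_self_eq_norm_sq, hzh1] at this
    simpa [hu] using this.symm
  refine ⟨u, huu, fun x => ?_⟩
  have h2 : (ℝ ∙ z).starProjection x
      = ⟪zh, x⟫ • zh := by
    rw [Submodule.starProjection_singleton, hzh, real_inner_smul_left, smul_smul]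
    congr 1
    push_cast
    field_simp
    simp
  have hproj : (ℝ ∙ z)ᗮ.starProjection x
      = x - ⟪zh, x⟫ • zh := by
    have h1 := Submodule.starProjection_add_starProjection_orthogonal (K := ℝ ∙ z) x
    rw [h2] at h1
    exact eq_sub_of_add_eq' h1
  have hrefl : Submodule.reflection (ℝ ∙ z)ᗮ x = x - (2 * ⟪zh, x⟫) • zh := by
    rw [Submodule.reflection_apply, hproj]
    module
  rw [hrefl, reflMat_mulVec, ← hdot x]
  rfl

lemma reflection_list_matrix {d : ℕ} (l : List (EuclideanSpace ℝ (Fin d))) :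
    ∃ lu : List (Fin d → ℝ), (∀ u ∈ lu, u ⬝ᵥ u = 1) ∧ ∀ x : EuclideanSpace ℝ (Fin d),
      WithLp.equiv 2 (Fin d → ℝ) (((l.map fun z => Submodule.reflection (ℝ ∙ z)ᗮ).prod) x)
        = ((lu.map reflMat).prod) *ᵥ (WithLp.equiv 2 (Fin d → ℝ) x) := by
  induction l with
  | nil =>
    exact ⟨[], by simp, fun x => by simp⟩
  | cons z l ih =>
    obtain ⟨lu, hlu, hprod⟩ := ih
    by_cases hz : z = 0
    · refine ⟨lu, hlu, fun x => ?_⟩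
      simp only [List.map_cons, List.prod_cons, LinearIsometryEquiv.coe_mul,
        Function.comp_apply]
      have hfix : ∀ y : EuclideanSpace ℝ (Fin d), Submodule.reflection (ℝ ∙ z)ᗮ y = y := by
        intro y
        apply Submodule.reflection_mem_subspace_eq_self
        intro a ha
        rw [hz, Submodule.span_zero_singleton, Submodule.mem_bot] at ha
        rw [ha]
        exact inner_zero_left y
      rw [hfix]
      exact hprod x
    · obtain ⟨u, huu, hmat⟩ := reflection_matrix z hz
      refine ⟨u :: lu, ?_, fun x => ?_⟩
      · intro u' hu'
        rcases List.mem_cons.mp hu' with h | h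
        · rw [h]; exact huu
        · exact hlu u' h
      · simp only [List.map_cons, List.prod_cons, LinearIsometryEquiv.coe_mul,
          Function.comp_apply, Matrix.mulVec_mulVec]
        rw [← Matrix.mulVec_mulVec, ← hprod x, hmat]

lemma det_reflList {d : ℕ} : ∀ lu : List (Fin d → ℝ), (∀ u ∈ lu, u ⬝ᵥ u = 1) →
    ((lu.map reflMat).prod).det = (-1 : ℝ)^lu.length := by
  intro lu
  induction lu with
  | nil => simp
  | cons u lu ih =>
    intro h
    simp only [List.map_cons, List.prod_cons, Matrix.det_mul, List.length_cons]
    rw [det_reflMat (h u (by simp)), ih (fun u' hu' => h u' (by simp [hu']))]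
    ring

theorem OPath.of_orthogonal {d : ℕ} (R : Matrix (Fin d) (Fin d) ℝ)
    (hR : Rᵀ * R = 1) (hdet : R.det = 1) : OPath R := by
  obtain ⟨φ, hφ⟩ := matrix_to_isometry R hR
  obtain ⟨l, -, hl⟩ := LinearIsometryEquiv.reflections_generate_dim φ
  obtain ⟨lu, hlu, hprod⟩ := reflection_list_matrix l
  have hkey : ∀ x : Fin d → ℝ, R *ᵥ x = ((lu.map reflMat).prod) *ᵥ x := by
    intro x
    have h1 := hφ ((WithLp.equiv 2 (Fin d → ℝ)).symm x)
    have h2 := hprod ((WithLp.equiv 2 (Fin d → ℝ)).symm x)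
    rw [← hl] at h2
    rw [Equiv.apply_symm_apply] at h1 h2
    rw [← h1, h2]
  have hRP : R = (lu.map reflMat).prod := by
    apply Matrix.toLin'.injective
    apply LinearMap.ext
    intro x
    rw [Matrix.toLin'_apply, Matrix.toLin'_apply, hkey x]
  have heven : Even lu.length := by
    rw [← neg_one_pow_eq_one_iff_even (R := ℝ) (by norm_num), ← det_reflList lu hlu, ← hRP,
      hdet]
  rw [hRP]
  exact OPath.list lu.length lu rfl hlu heven

noncomputable section

namespace Stmt16Aux

variable {n d : ℕ} {Γ : Subgroup (Equiv.Perm (Fin n))}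

lemma rep_one {T : Γ → Matrix (Fin d) (Fin d) ℝ} (h : IsRep Γ T) : T 1 = 1 := by
  obtain ⟨ho, hm⟩ := h
  have h1 : T 1 * T 1 = T 1 := by rw [← hm]; simp
  have hu : IsUnit (T 1).det := Matrix.isUnit_det_of_left_inverse (ho 1)
  calc T 1 = (T 1)⁻¹ * (T 1 * T 1) := by
        rw [← Matrix.mul_assoc, Matrix.nonsing_inv_mul _ hu, Matrix.one_mul]
    _ = (T 1)⁻¹ * T 1 := by rw [h1]
    _ = 1 := Matrix.nonsing_inv_mul _ hu

lemma rep_inv {T : Γ → Matrix (Fin d) (Fin d) ℝ} (h : IsRep Γ T) (φ : Γ) :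
    T φ⁻¹ = (T φ)ᵀ := by
  obtain ⟨ho, hm⟩ := h
  have h1 : T φ⁻¹ * T φ = 1 := by rw [← hm]; simp [rep_one ⟨ho, hm⟩]
  have h2 : (T φ)ᵀ * T φ = 1 := ho φ
  have hu : IsUnit (T φ).det := Matrix.isUnit_det_of_left_inverse h2
  calc T φ⁻¹ = T φ⁻¹ * (T φ * (T φ)⁻¹) := by rw [Matrix.mul_nonsing_inv _ hu, Matrix.mul_one]
    _ = (T φ⁻¹ * T φ) * (T φ)⁻¹ := by rw [Matrix.mul_assoc]
    _ = (T φ)ᵀ * T φ * (T φ)⁻¹ := by rw [h1, h2]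
    _ = (T φ)ᵀ * (T φ * (T φ)⁻¹) := by rw [Matrix.mul_assoc]
    _ = (T φ)ᵀ := by rw [Matrix.mul_nonsing_inv _ hu, Matrix.mul_one]

lemma arr_sum (v w : Fin n → Fin d → ℝ) :
    (arrMat w)ᵀ * arrMat v = ∑ i : Fin n, vecMulVec (w i) (v i) := by
  ext j k
  rw [Matrix.sum_apply]
  simp only [Matrix.mul_apply, Matrix.transpose_apply, Matrix.vecMulVec_apply, arrMat,
    Matrix.of_apply]

lemma mul_vecMulVec (C : Matrix (Fin d) (Fin d) ℝ) (a b : Fin d → ℝ) :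
    C * vecMulVec a b = vecMulVec (C *ᵥ a) b := by
  ext i j
  simp only [Matrix.mul_apply, Matrix.vecMulVec_apply, Matrix.mulVec, dotProduct,
    Finset.sum_mul]
  congr 1; ext k; ring

lemma vecMulVec_mul (C : Matrix (Fin d) (Fin d) ℝ) (a b : Fin d → ℝ) :
    vecMulVec a b * Cᵀ = vecMulVec a (C *ᵥ b) := by
  ext i j
  simp only [Matrix.mul_apply, Matrix.vecMulVec_apply, Matrix.transpose_apply, Matrix.mulVec,
    dotProduct, Finset.mul_sum]
  congr 1; ext k; ring

/-- The fundamental intertwining relation `T'_φ A = A T_φ` for `A = M̄ᵀ M`. -/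
lemma intertwine {v w : Fin n → Fin d → ℝ} {T T' : Γ → Matrix (Fin d) (Fin d) ℝ}
    (hT : IsRepOf Γ T v) (hT' : IsRepOf Γ T' w) (φ : Γ) :
    T' φ * ((arrMat w)ᵀ * arrMat v) = ((arrMat w)ᵀ * arrMat v) * T φ := by
  obtain ⟨⟨hTo, hTm⟩, hTv⟩ := hT
  obtain ⟨⟨hT'o, hT'm⟩, hT'v⟩ := hT'
  have key : T' φ * ((arrMat w)ᵀ * arrMat v) * (T φ)ᵀ = (arrMat w)ᵀ * arrMat v := by
    rw [arr_sum, Finset.mul_sum, Finset.sum_mul]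
    calc ∑ i, T' φ * vecMulVec (w i) (v i) * (T φ)ᵀ
        = ∑ i, vecMulVec (w (φ.val i)) (v (φ.val i)) := by
          apply Finset.sum_congr rfl
          intro i _
          rw [mul_vecMulVec, vecMulVec_mul, hTv φ i, hT'v φ i]
      _ = ∑ i, vecMulVec (w i) (v i) := Fintype.sum_equiv φ.val _ _ (fun i => rfl)
  calc T' φ * ((arrMat w)ᵀ * arrMat v)
      = T' φ * ((arrMat w)ᵀ * arrMat v) * ((T φ)ᵀ * T φ) := by rw [hTo φ, Matrix.mul_one]
    _ = (T' φ * ((arrMat w)ᵀ * arrMat v) * (T φ)ᵀ) * T φ := by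
        simp only [Matrix.mul_assoc]
    _ = ((arrMat w)ᵀ * arrMat v) * T φ := by rw [key]

/-- If `M̄ᵀ M = 0` then the arrangement spaces are orthogonal. -/
lemma orth_of_eq_zero {v w : Fin n → Fin d → ℝ}
    (h : (arrMat w)ᵀ * arrMat v = 0) : OrthSpaces (arrSpace v) (arrSpace w) := by
  intro x hx y hy
  induction hx using Submodule.span_induction with
  | mem a ha =>
    obtain ⟨j, rfl⟩ := ha
    induction hy using Submodule.span_induction with
    | mem b hb =>
      obtain ⟨k, rfl⟩ := hb
      have := congrFun (congrFun h k) j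
      simp only [Matrix.mul_apply, Matrix.transpose_apply, Matrix.zero_apply, arrMat,
        Matrix.of_apply] at this
      simpa [dotProduct, mul_comm, arrMat] using this
    | zero => simp
    | add b c _ _ hb hc => rw [dotProduct_add, hb, hc, add_zero]
    | smul r b _ hb => rw [dotProduct_smul, hb, smul_zero]
  | zero => simp
  | add a b _ _ ha hb => rw [add_dotProduct, ha, hb, add_zero]
  | smul r a _ ha => rw [smul_dotProduct, ha, smul_zero]


variable {n d : ℕ} {Γ : Subgroup (Equiv.Perm (Fin n))}

/-- A symmetric matrix commuting with an irreducible representation is scalar. -/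
lemma commutant_scalar (hd : 0 < d) {T : Γ → Matrix (Fin d) (Fin d) ℝ}
    (hirr : IrredRep Γ T) (B : Matrix (Fin d) (Fin d) ℝ) (hsym : Bᵀ = B)
    (hcomm : ∀ φ : Γ, B * T φ = T φ * B) : ∃ α : ℝ, B = α • 1 := by
  have hB : B.IsHermitian := by
    rw [Matrix.IsHermitian]
    ext i j
    simp only [Matrix.conjTranspose_apply, star_trivial]
    exact congrFun (congrFun hsym i) j
  have j : Fin d := ⟨0, hd⟩
  set α := hB.eigenvalues j with hα
  refine ⟨α, ?_⟩
  set W : Submodule ℝ (Fin d → ℝ) :=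
    { carrier := {x | B *ᵥ x = α • x}
      add_mem' := by
        intro a b ha hb
        simp only [Set.mem_setOf_eq] at *
        rw [Matrix.mulVec_add, ha, hb, smul_add]
      zero_mem' := by simp
      smul_mem' := by
        intro r a ha
        simp only [Set.mem_setOf_eq] at *
        rw [Matrix.mulVec_smul, ha, smul_comm] } with hW
  have hWinv : ∀ (φ : Γ), ∀ x ∈ W, (T φ).mulVec x ∈ W := by
    intro φ x hx
    have hx' : B *ᵥ x = α • x := hx
    show B *ᵥ (T φ *ᵥ x) = α • (T φ *ᵥ x)
    rw [Matrix.mulVec_mulVec, hcomm φ, ← Matrix.mulVec_mulVec, hx', Matrix.mulVec_smul]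
  have hvec : (⇑(hB.eigenvectorBasis j) : Fin d → ℝ) ∈ W := hB.mulVec_eigenvectorBasis j
  rcases hirr W hWinv with hbot | htop
  · exfalso
    rw [hbot] at hvec
    exact hB.eigenvectorBasis.orthonormal.ne_zero j (by
      ext i
      exact congrFun (Submodule.mem_bot ℝ |>.mp hvec) i)
  · apply Matrix.toLin'.injective
    apply LinearMap.ext
    intro x
    have hx : x ∈ W := htop ▸ Submodule.mem_top
    have hx' : B *ᵥ x = α • x := hx
    rw [Matrix.toLin'_apply, Matrix.toLin'_apply, hx', Matrix.smul_mulVec,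
      Matrix.one_mulVec]

lemma eq_zero_of_transpose_mul_self_eq_zero {X : Matrix (Fin n) (Fin d) ℝ}
    (h : Xᵀ * X = 0) : X = 0 := by
  ext i j
  have hdiag := congrFun (congrFun h j) j
  simp only [Matrix.mul_apply, Matrix.transpose_apply, Matrix.zero_apply] at hdiag
  have hterm : X i j * X i j = 0 := by
    have hnn : ∀ i' ∈ Finset.univ, (0:ℝ) ≤ X i' j * X i' j := fun i' _ => mul_self_nonneg _
    have := (Finset.sum_eq_zero_iff_of_nonneg hnn).mp hdiag i (Finset.mem_univ i)
    exact this
  have : X i j = 0 := by nlinarith [hterm]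
  simpa using this

lemma dot_shift {a b : ℕ} (C : Matrix (Fin a) (Fin b) ℝ) (y : Fin b → ℝ) (z : Fin a → ℝ) :
    (C *ᵥ y) ⬝ᵥ z = y ⬝ᵥ (Cᵀ *ᵥ z) := by
  rw [dotProduct_comm, Matrix.dotProduct_mulVec, dotProduct_comm,
    Matrix.mulVec_transpose]

lemma dot_self_nonneg {a : ℕ} (z : Fin a → ℝ) : 0 ≤ z ⬝ᵥ z :=
  Finset.sum_nonneg fun i _ => mul_self_nonneg _

lemma D_zero {n d : ℕ} (M Mb : Matrix (Fin n) (Fin d) ℝ) (Q' : Matrix (Fin d) (Fin d) ℝ)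
    (c : ℝ) (h1 : Mbᵀ * Mb = 1) (e1 : Mbᵀ * (M * Q'ᵀ) = c • 1)
    (e2 : (M * Q'ᵀ)ᵀ * Mb = c • 1) (e3 : (M * Q'ᵀ)ᵀ * (M * Q'ᵀ) = 1) (h5 : c ^ 2 = 1) :
    (Mb - c • (M * Q'ᵀ))ᵀ * (Mb - c • (M * Q'ᵀ)) = 0 := by
  rw [Matrix.transpose_sub, Matrix.transpose_smul, Matrix.sub_mul, Matrix.mul_sub,
    Matrix.mul_sub, Matrix.smul_mul, Matrix.smul_mul, Matrix.mul_smul, Matrix.mul_smul,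
    h1, e1, e2, e3, smul_smul, ← pow_two, h5, one_smul]
  abel

lemma GS_facts {n d : ℕ} (M P : Matrix (Fin n) (Fin d) ℝ) (c s : ℝ)
    (hM : Mᵀ * M = 1) (hP : Pᵀ * P = 1) (hMP : Mᵀ * P = c • 1) (hPM : Pᵀ * M = c • 1)
    (hs : s ≠ 0) (hssq : s ^ 2 = 1 - c ^ 2) :
    let N := s⁻¹ • (P - c • M)
    Mᵀ * N = 0 ∧ Nᵀ * M = 0 ∧ Nᵀ * N = 1 := by
  intro N
  have hN : N = s⁻¹ • (P - c • M) := rfl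
  refine ⟨?_, ?_, ?_⟩
  · rw [hN, Matrix.mul_smul, Matrix.mul_sub, Matrix.mul_smul, hM, hMP, sub_self, smul_zero]
  · rw [hN, Matrix.transpose_smul, Matrix.smul_mul, Matrix.transpose_sub,
      Matrix.transpose_smul, Matrix.sub_mul, Matrix.smul_mul, hM, hPM, sub_self, smul_zero]
  · rw [hN, Matrix.transpose_smul, Matrix.smul_mul, Matrix.mul_smul, smul_smul,
      Matrix.transpose_sub, Matrix.transpose_smul, Matrix.sub_mul, Matrix.mul_sub,
      Matrix.mul_sub, Matrix.smul_mul, Matrix.smul_mul, Matrix.mul_smul, Matrix.mul_smul,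
      hM, hP, hMP, hPM, smul_smul, ← pow_two]
    have key : (1 : Matrix (Fin d) (Fin d) ℝ) - (c * c) • 1 - ((c * c) • 1 - (c * c) • 1)
        = (1 - c ^ 2) • (1 : Matrix (Fin d) (Fin d) ℝ) := by
      rw [sub_self, sub_zero, sub_smul, one_smul, pow_two]
    rw [key, smul_smul, ← hssq]
    rw [show s⁻¹ ^ 2 * s ^ 2 = 1 by field_simp, one_smul]

lemma comb_norm {n d : ℕ} (M N : Matrix (Fin n) (Fin d) ℝ) (a b : ℝ)
    (hM : Mᵀ * M = 1) (hN : Nᵀ * N = 1) (h1 : Mᵀ * N = 0) (h2 : Nᵀ * M = 0)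
    (hab : a ^ 2 + b ^ 2 = 1) :
    (a • M + b • N)ᵀ * (a • M + b • N) = 1 := by
  simp only [Matrix.transpose_add, Matrix.transpose_smul, Matrix.add_mul, Matrix.mul_add,
    Matrix.smul_mul, Matrix.mul_smul, hM, hN, h1, h2, smul_zero, add_zero, zero_add,
    smul_smul]
  rw [← add_smul]
  rw [show a * a + b * b = 1 by nlinarith [hab], one_smul]

lemma conj_orth {d : ℕ} (R S : Matrix (Fin d) (Fin d) ℝ) (hR : Rᵀ * R = 1) (hRc : R * Rᵀ = 1)
    (hS : Sᵀ * S = 1) : (R * S * Rᵀ)ᵀ * (R * S * Rᵀ) = 1 := by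
  rw [Matrix.transpose_mul, Matrix.transpose_mul, Matrix.transpose_transpose]
  calc R * ((S)ᵀ * Rᵀ) * (R * S * Rᵀ)
      = R * (Sᵀ * ((Rᵀ * R) * (S * Rᵀ))) := by simp only [Matrix.mul_assoc]
    _ = R * (Sᵀ * (S * Rᵀ)) := by rw [hR, Matrix.one_mul]
    _ = R * ((Sᵀ * S) * Rᵀ) := by rw [Matrix.mul_assoc]
    _ = 1 := by rw [hS, Matrix.one_mul, hRc]

lemma conj_mul {d : ℕ} (R S S' : Matrix (Fin d) (Fin d) ℝ) (hR : Rᵀ * R = 1) :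
    (R * S * Rᵀ) * (R * S' * Rᵀ) = R * (S * S') * Rᵀ := by
  calc (R * S * Rᵀ) * (R * S' * Rᵀ)
      = R * (S * ((Rᵀ * R) * (S' * Rᵀ))) := by simp only [Matrix.mul_assoc]
    _ = R * (S * (S' * Rᵀ)) := by rw [hR, Matrix.one_mul]
    _ = R * (S * S') * Rᵀ := by simp only [Matrix.mul_assoc]

lemma conj_vec {d : ℕ} (R S : Matrix (Fin d) (Fin d) ℝ) (hR : Rᵀ * R = 1) (y : Fin d → ℝ) :
    (R * S * Rᵀ) *ᵥ (R *ᵥ y) = R *ᵥ (S *ᵥ y) := by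
  rw [Matrix.mulVec_mulVec]
  calc (R * S * Rᵀ * R) *ᵥ y = (R * (S * (Rᵀ * R))) *ᵥ y := by simp only [Matrix.mul_assoc]
    _ = (R * S) *ᵥ y := by rw [hR, Matrix.mul_one]
    _ = R *ᵥ (S *ᵥ y) := by rw [← Matrix.mulVec_mulVec]

end Stmt16Aux
end
set_option maxHeartbeats 2000000 in
theorem stmt16 {n d : ℕ} (Γ : Subgroup (Equiv.Perm (Fin n))) (hd : Odd d)
    (v w : Fin n → Fin d → ℝ)
    (hv : v ∈ SdSet n d Γ) (hw : w ∈ SdSet n d Γ)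
    (T T' : Γ → Matrix (Fin d) (Fin d) ℝ)
    (hT : IsRepOf Γ T v) (hTirr : IrredRep Γ T)
    (hT' : IsRepOf Γ T' w) (hT'irr : IrredRep Γ T')
    (hne : ¬ AreEquivalent v w)
    (horth : ¬ OrthSpaces (arrSpace v) (arrSpace w)) :
    DeformEquiv Γ v w := by
  classical
  obtain ⟨hvN, -⟩ := hv
  obtain ⟨hwN, -⟩ := hw
  have hvN' : (arrMat v)ᵀ * arrMat v = 1 := hvN
  have hwN' : (arrMat w)ᵀ * arrMat w = 1 := hwN
  obtain ⟨dm, hdm⟩ := hd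
  have hd0 : 0 < d := by omega
  set M : Matrix (Fin n) (Fin d) ℝ := arrMat v with hM
  set Mb : Matrix (Fin n) (Fin d) ℝ := arrMat w with hMb
  set A : Matrix (Fin d) (Fin d) ℝ := Mbᵀ * M with hA
  -- intertwining relations
  have hint : ∀ φ : Γ, T' φ * A = A * T φ := fun φ => Stmt16Aux.intertwine hT hT' φ
  have hintT : ∀ φ : Γ, (T' φ)ᵀ * A = A * (T φ)ᵀ := by
    intro φ
    have h1 := hint φ⁻¹
    rwa [Stmt16Aux.rep_inv hT.1, Stmt16Aux.rep_inv hT'.1] at h1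
  have hAT : ∀ φ : Γ, Aᵀ * T' φ = T φ * Aᵀ := by
    intro φ
    have := congrArg Matrix.transpose (hintT φ)
    simpa [Matrix.transpose_mul, Matrix.transpose_transpose] using this
  have hBcomm : ∀ φ : Γ, (Aᵀ * A) * T φ = T φ * (Aᵀ * A) := by
    intro φ
    calc Aᵀ * A * T φ = Aᵀ * (A * T φ) := Matrix.mul_assoc Aᵀ A (T φ)
      _ = Aᵀ * (T' φ * A) := by rw [hint φ]
      _ = (Aᵀ * T' φ) * A := (Matrix.mul_assoc Aᵀ (T' φ) A).symm
      _ = T φ * Aᵀ * A := by rw [hAT φ]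
      _ = T φ * (Aᵀ * A) := Matrix.mul_assoc (T φ) Aᵀ A
  have hB'comm : ∀ φ : Γ, (A * Aᵀ) * T' φ = T' φ * (A * Aᵀ) := by
    intro φ
    calc A * Aᵀ * T' φ = A * (Aᵀ * T' φ) := Matrix.mul_assoc A Aᵀ (T' φ)
      _ = A * (T φ * Aᵀ) := by rw [hAT φ]
      _ = (A * T φ) * Aᵀ := (Matrix.mul_assoc A (T φ) Aᵀ).symm
      _ = (T' φ * A) * Aᵀ := by rw [hint φ]
      _ = T' φ * (A * Aᵀ) := Matrix.mul_assoc (T' φ) A Aᵀ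
  obtain ⟨α, hBα⟩ := Stmt16Aux.commutant_scalar hd0 hTirr (Aᵀ * A)
    (by rw [Matrix.transpose_mul, Matrix.transpose_transpose]) hBcomm
  obtain ⟨β, hB'β⟩ := Stmt16Aux.commutant_scalar hd0 hT'irr (A * Aᵀ)
    (by rw [Matrix.transpose_mul, Matrix.transpose_transpose]) hB'comm
  have hαβ : α = β := by
    have h1 := Matrix.trace_mul_comm Aᵀ A
    rw [hBα, hB'β] at h1
    have hd' : (d : ℝ) ≠ 0 := Nat.cast_ne_zero.mpr (by omega)
    rw [Matrix.trace_smul, Matrix.trace_smul, Matrix.trace_one] at h1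
    simp only [Fintype.card_fin, smul_eq_mul] at h1
    exact mul_right_cancel₀ hd' h1
  rw [← hαβ] at hB'β
  -- A is nonzero
  have hA0 : A ≠ 0 := by
    intro h0
    exact horth (Stmt16Aux.orth_of_eq_zero h0)
  obtain ⟨jk, hjk⟩ : ∃ p : Fin d × Fin d, A p.1 p.2 ≠ 0 := by
    by_contra hcon
    push_neg at hcon
    exact hA0 (by ext j k; simpa using hcon (j, k))
  set x : Fin d → ℝ := Pi.single jk.2 1 with hx
  have hxx : x ⬝ᵥ x = 1 := by simp [hx, dotProduct, Pi.single_apply]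
  have hAxj : (A *ᵥ x) jk.1 = A jk.1 jk.2 := by
    simp [hx, Matrix.mulVec, dotProduct, Pi.single_apply]
  have keydot : ∀ (C : Matrix (Fin n) (Fin d) ℝ) (D : Matrix (Fin d) (Fin d) ℝ),
      Cᵀ * C = D → ∀ y, (C *ᵥ y) ⬝ᵥ (C *ᵥ y) = y ⬝ᵥ (D *ᵥ y) := by
    intro C D hCD y
    rw [Stmt16Aux.dot_shift, Matrix.mulVec_mulVec, hCD]
  have keydot' : ∀ (C : Matrix (Fin d) (Fin d) ℝ) (D : Matrix (Fin d) (Fin d) ℝ),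
      Cᵀ * C = D → ∀ y, (C *ᵥ y) ⬝ᵥ (C *ᵥ y) = y ⬝ᵥ (D *ᵥ y) := by
    intro C D hCD y
    rw [Stmt16Aux.dot_shift, Matrix.mulVec_mulVec, hCD]
  have hAxx : (A *ᵥ x) ⬝ᵥ (A *ᵥ x) = α := by
    rw [keydot' A (Aᵀ * A) rfl x, hBα, Matrix.smul_mulVec, Matrix.one_mulVec,
      dotProduct_smul, hxx]
    simp
  have hαpos : 0 < α := by
    rw [← hAxx]
    apply Finset.sum_pos'
    · intro i _; exact mul_self_nonneg _
    · exact ⟨jk.1, Finset.mem_univ _, by rw [hAxj]; exact mul_self_pos.mpr hjk⟩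
  have hα1 : α ≤ 1 := by
    set y : Fin n → ℝ := M *ᵥ x with hy
    have hyy : y ⬝ᵥ y = 1 := by
      rw [hy, keydot M 1 hvN' x, Matrix.one_mulVec, hxx]
    set z : Fin d → ℝ := Mbᵀ *ᵥ y with hz
    have hzA : A *ᵥ x = z := by rw [hz, hy, hA, ← Matrix.mulVec_mulVec]
    have hMbz : (Mb *ᵥ z) ⬝ᵥ (Mb *ᵥ z) = z ⬝ᵥ z := by
      rw [keydot Mb 1 hwN' z, Matrix.one_mulVec]
    have hcross : (Mb *ᵥ z) ⬝ᵥ y = z ⬝ᵥ z := by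
      rw [Stmt16Aux.dot_shift, hz]
    have h0 : 0 ≤ (y - Mb *ᵥ z) ⬝ᵥ (y - Mb *ᵥ z) := Stmt16Aux.dot_self_nonneg _
    have hexp : (y - Mb *ᵥ z) ⬝ᵥ (y - Mb *ᵥ z) = y ⬝ᵥ y - z ⬝ᵥ z := by
      rw [sub_dotProduct, dotProduct_sub, dotProduct_sub, hMbz, hcross,
        dotProduct_comm y (Mb *ᵥ z), hcross]
      ring
    rw [← hAxx, hzA]
    rw [hexp] at h0
    linarith
  -- the orthogonal intertwiner
  set c₀ : ℝ := Real.sqrt α with hc₀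
  have hc₀pos : 0 < c₀ := Real.sqrt_pos.mpr hαpos
  have hc₀sq : c₀ ^ 2 = α := Real.sq_sqrt hαpos.le
  set Q : Matrix (Fin d) (Fin d) ℝ := c₀⁻¹ • A with hQ
  have hQo : Qᵀ * Q = 1 := by
    rw [hQ, Matrix.transpose_smul, Matrix.smul_mul, Matrix.mul_smul, hBα, smul_smul, smul_smul]
    rw [show c₀⁻¹ * c₀⁻¹ * α = 1 by rw [← hc₀sq, pow_two]; field_simp]
    exact one_smul _ _
  set ε : ℝ := Q.det with hε
  have hε2 : ε * ε = 1 := by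
    have h1 := congrArg Matrix.det hQo
    rwa [Matrix.det_mul, Matrix.det_transpose, Matrix.det_one, ← hε] at h1
  set Q' : Matrix (Fin d) (Fin d) ℝ := ε • Q with hQ'
  have hQ'c : Q' = (ε * c₀⁻¹) • A := by rw [hQ', hQ, smul_smul]
  have hQ'o : Q'ᵀ * Q' = 1 := by
    rw [hQ', Matrix.transpose_smul, Matrix.smul_mul, Matrix.mul_smul, hQo, smul_smul, hε2,
      one_smul]
  have hQ'oc : Q' * Q'ᵀ = 1 := mul_eq_one_comm.mp hQ'o
  have hdetQ' : Q'.det = 1 := by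
    rw [hQ', Matrix.det_smul, ← hε, Fintype.card_fin]
    calc ε ^ d * ε = ε ^ (d + 1) := (pow_succ ε d).symm
      _ = (ε * ε) ^ (dm + 1) := by rw [← pow_two, ← pow_mul]; congr 1; omega
      _ = 1 := by rw [hε2, one_pow]
  set c : ℝ := ε * c₀ with hc
  have hcsq : c ^ 2 = α := by
    rw [hc, mul_pow, hc₀sq, pow_two, hε2, one_mul]
  have hcne : c ≠ 0 := by
    intro h0
    rw [h0] at hcsq
    norm_num at hcsq
    exact absurd hcsq.symm (ne_of_gt hαpos)
  have hscalar : ε * c₀⁻¹ * α = c := by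
    rw [← hc₀sq]
    field_simp [hc]
    ring
  have hQ'A : Q'ᵀ * A = c • 1 := by
    rw [hQ'c, Matrix.transpose_smul, Matrix.smul_mul, hBα, smul_smul, hscalar]
  have hAtQ' : Aᵀ * Q' = c • 1 := by
    rw [hQ'c, Matrix.mul_smul, hBα, smul_smul, mul_comm (ε * c₀⁻¹) α]
    rw [show α * (ε * c₀⁻¹) = c from by rw [mul_comm]; exact hscalar]
  have hAQ't : A * Q'ᵀ = c • 1 := by
    rw [hQ'c, Matrix.transpose_smul, Matrix.mul_smul, hB'β, smul_smul, mul_comm (ε * c₀⁻¹) α]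
    rw [show α * (ε * c₀⁻¹) = c from by rw [mul_comm]; exact hscalar]
  have hQ'At : Q' * Aᵀ = c • 1 := by
    rw [hQ'c, Matrix.smul_mul, hB'β, smul_smul, hscalar]
  -- transposed helper products
  have hMtMb : Mᵀ * Mb = Aᵀ := by rw [hA, Matrix.transpose_mul, Matrix.transpose_transpose]
  -- exclude the equivalent case
  have hclt : c ^ 2 < 1 := by
    rcases lt_or_eq_of_le hα1 with h | h
    · rwa [hcsq]
    · exfalso
      apply hne
      have e1 : Mbᵀ * (M * Q'ᵀ) = c • 1 := by rw [← Matrix.mul_assoc, ← hA, hAQ't]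
      have e2 : (M * Q'ᵀ)ᵀ * Mb = c • 1 := by
        rw [Matrix.transpose_mul, Matrix.transpose_transpose, Matrix.mul_assoc, hMtMb, hQ'At]
      have e3 : (M * Q'ᵀ)ᵀ * (M * Q'ᵀ) = 1 := by
        rw [Matrix.transpose_mul, Matrix.transpose_transpose, Matrix.mul_assoc,
          ← Matrix.mul_assoc Mᵀ, hvN', Matrix.one_mul, hQ'oc]
      have hcsq1 : c ^ 2 = 1 := by rw [hcsq, h]
      have hD := Stmt16Aux.D_zero M Mb Q' c hwN' e1 e2 e3 hcsq1
      have hDrw : Mb = c • (M * Q'ᵀ) :=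
        sub_eq_zero.mp (Stmt16Aux.eq_zero_of_transpose_mul_self_eq_zero hD)
      refine ⟨c • Q', ?_, ?_⟩
      · rw [Matrix.det_smul, hdetQ', mul_one, Fintype.card_fin]
        exact pow_ne_zero _ hcne
      · intro i
        funext j
        have h2 := congrFun (congrFun hDrw i) j
        have hwij : w i j = Mb i j := rfl
        rw [hwij, h2]
        simp only [Matrix.smul_apply, Matrix.mul_apply, Matrix.transpose_apply, smul_eq_mul,
          Matrix.smul_mulVec, Pi.smul_apply, Matrix.mulVec, dotProduct]
        rw [Finset.mul_sum]
        apply Finset.sum_congr rfl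
        intro k _
        have hMik : M i k = v i k := rfl
        rw [hMik]
        ring
  have hcgt : -1 < c := by nlinarith [hclt]
  have hclt1 : c < 1 := by nlinarith [hclt]
  -- Gram-Schmidt
  set s : ℝ := Real.sqrt (1 - c ^ 2) with hs
  have hspos : 0 < s := Real.sqrt_pos.mpr (by nlinarith [hclt])
  have hssq : s ^ 2 = 1 - c ^ 2 := Real.sq_sqrt (by nlinarith [hclt])
  set u : Fin n → Fin d → ℝ := fun i => s⁻¹ • (Q'ᵀ *ᵥ w i - c • v i) with hu
  set P : Matrix (Fin n) (Fin d) ℝ := Mb * Q' with hP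
  have hNarr : arrMat u = s⁻¹ • (P - c • M) := by
    ext i j
    show u i j = s⁻¹ * ((Mb * Q') i j - c • M i j)
    rw [hu]
    simp only [Pi.smul_apply, Pi.sub_apply, smul_eq_mul, Matrix.mulVec, Matrix.mul_apply,
      Matrix.transpose_apply, dotProduct]
    congr 2
    · apply Finset.sum_congr rfl
      intro k _
      show Q' k j * w i k = Mb i k * Q' k j
      have : Mb i k = w i k := rfl
      rw [this]; ring
  have hPo : Pᵀ * P = 1 := by
    rw [hP, Matrix.transpose_mul, Matrix.mul_assoc, ← Matrix.mul_assoc Mbᵀ, hwN',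
      Matrix.one_mul, hQ'o]
  have hMP : Mᵀ * P = c • 1 := by
    rw [hP, ← Matrix.mul_assoc, hMtMb, hAtQ']
  have hPM : Pᵀ * M = c • 1 := by
    rw [hP, Matrix.transpose_mul, Matrix.mul_assoc, ← hA, hQ'A]
  obtain ⟨hMtN, hNtM, hNtN⟩ :=
    Stmt16Aux.GS_facts M P c s hvN' hPo hMP hPM (ne_of_gt hspos) hssq
  rw [← hNarr] at hMtN hNtM hNtN
  -- equivariance of u
  have hTQ't : ∀ φ : Γ, T φ * Q'ᵀ = Q'ᵀ * T' φ := by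
    intro φ
    have h1 : (T' φ)ᵀ * Q' = Q' * (T φ)ᵀ := by
      rw [hQ'c, Matrix.mul_smul, Matrix.smul_mul, hintT φ]
    have h2 := congrArg Matrix.transpose h1
    simp only [Matrix.transpose_mul, Matrix.transpose_transpose] at h2
    exact h2.symm
  have hTu : ∀ (φ : Γ) (i : Fin n), T φ *ᵥ u i = u (φ.val i) := by
    intro φ i
    have h1 : T φ *ᵥ (Q'ᵀ *ᵥ w i) = Q'ᵀ *ᵥ w (φ.val i) := by
      rw [Matrix.mulVec_mulVec, hTQ't φ, ← Matrix.mulVec_mulVec, hT'.2 φ i]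
    rw [hu]
    show T φ *ᵥ (s⁻¹ • (Q'ᵀ *ᵥ w i - c • v i)) = s⁻¹ • (Q'ᵀ *ᵥ w (φ.val i) - c • v (φ.val i))
    rw [Matrix.mulVec_smul, Matrix.mulVec_sub, Matrix.mulVec_smul, hT.2 φ i, h1]
  -- membership of combinations
  have hmem1 : ∀ a b : ℝ, a ^ 2 + b ^ 2 = 1 →
      (fun i => a • v i + b • u i) ∈ SdSet n d Γ := by
    intro a b hab
    have harr : arrMat (fun i => a • v i + b • u i) = a • M + b • arrMat u := by
      ext i j
      show a • v i j + b • u i j = a • M i j + b • (arrMat u) i j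
      rfl
    constructor
    · show (arrMat _)ᵀ * arrMat _ = 1
      rw [harr]
      exact Stmt16Aux.comb_norm M (arrMat u) a b hvN' hNtN hMtN hNtM hab
    · refine ⟨T, hT.1, fun φ i => ?_⟩
      show T φ *ᵥ (a • v i + b • u i) = a • v (φ.val i) + b • u (φ.val i)
      rw [Matrix.mulVec_add, Matrix.mulVec_smul, Matrix.mulVec_smul, hT.2 φ i, hTu φ i]
  -- path 1
  set θ : ℝ := Real.arccos c with hθ
  set p1 : ℝ → (Fin n → Fin d → ℝ) :=
    fun t i => Real.cos (t * θ) • v i + Real.sin (t * θ) • u i with hp1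
  have hp1mem : ∀ t : ℝ, p1 t ∈ SdSet n d Γ := by
    intro t
    exact hmem1 _ _ (Real.cos_sq_add_sin_sq (t * θ))
  have hp10 : p1 0 = v := by
    funext i
    show Real.cos (0 * θ) • v i + Real.sin (0 * θ) • u i = v i
    rw [zero_mul, Real.cos_zero, Real.sin_zero, one_smul, zero_smul, add_zero]
  have hp11 : p1 1 = fun i => Q'ᵀ *ᵥ w i := by
    funext i
    show Real.cos (1 * θ) • v i + Real.sin (1 * θ) • u i = Q'ᵀ *ᵥ w i
    rw [one_mul, hθ, Real.cos_arccos hcgt.le hclt1.le, Real.sin_arccos, ← hs, hu]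
    show c • v i + s • (s⁻¹ • (Q'ᵀ *ᵥ w i - c • v i)) = Q'ᵀ *ᵥ w i
    rw [smul_smul, mul_inv_cancel₀ (ne_of_gt hspos), one_smul]
    abel
  have hp1c : Continuous p1 := by
    apply continuous_pi
    intro i
    apply continuous_pi
    intro j
    show Continuous fun t => (Real.cos (t * θ) • v i + Real.sin (t * θ) • u i) j
    simp only [Pi.add_apply, Pi.smul_apply, smul_eq_mul]
    fun_prop
  -- path 2
  obtain ⟨γ, hγc, hγo, hγ0, hγ1⟩ := OPath.of_orthogonal Q'ᵀ
    (by rw [Matrix.transpose_transpose]; exact hQ'oc)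
    (by rw [Matrix.det_transpose]; exact hdetQ')
  set δ : ℝ → Matrix (Fin d) (Fin d) ℝ := fun t => γ (1 - t) with hδ
  have hδo : ∀ t, (δ t)ᵀ * δ t = 1 := fun t => hγo (1 - t)
  have hδoc : ∀ t, δ t * (δ t)ᵀ = 1 := fun t => mul_eq_one_comm.mp (hδo t)
  set p2 : ℝ → (Fin n → Fin d → ℝ) := fun t i => δ t *ᵥ w i with hp2
  have hp2mem : ∀ t : ℝ, p2 t ∈ SdSet n d Γ := by
    intro t
    have harr : arrMat (p2 t) = Mb * (δ t)ᵀ := by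
      ext i j
      show (δ t *ᵥ w i) j = ∑ k, Mb i k * (δ t) j k
      simp only [Matrix.mulVec, dotProduct]
      apply Finset.sum_congr rfl
      intro k _
      have : Mb i k = w i k := rfl
      rw [this]; ring
    constructor
    · show (arrMat _)ᵀ * arrMat _ = 1
      rw [harr, Matrix.transpose_mul, Matrix.transpose_transpose, Matrix.mul_assoc,
        ← Matrix.mul_assoc Mbᵀ, hwN', Matrix.one_mul, hδoc t]
    · refine ⟨fun φ => δ t * T' φ * (δ t)ᵀ, ⟨fun φ => ?_, fun φ ψ => ?_⟩, fun φ i => ?_⟩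
      · exact Stmt16Aux.conj_orth (δ t) (T' φ) (hδo t) (hδoc t) (hT'.1.1 φ)
      · show δ t * T' (φ * ψ) * (δ t)ᵀ = (δ t * T' φ * (δ t)ᵀ) * (δ t * T' ψ * (δ t)ᵀ)
        rw [Stmt16Aux.conj_mul (δ t) (T' φ) (T' ψ) (hδo t), hT'.1.2 φ ψ]
      · show (δ t * T' φ * (δ t)ᵀ) *ᵥ (δ t *ᵥ w i) = δ t *ᵥ w (φ.val i)
        rw [Stmt16Aux.conj_vec (δ t) (T' φ) (hδo t) (w i), hT'.2 φ i]
  have hp20 : p2 0 = p1 1 := by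
    rw [hp11]
    funext i
    show γ (1 - 0) *ᵥ w i = Q'ᵀ *ᵥ w i
    rw [sub_zero, hγ1]
  have hp21 : p2 1 = w := by
    funext i
    show γ (1 - 1) *ᵥ w i = w i
    rw [sub_self, hγ0, Matrix.one_mulVec]
  have hp2c : Continuous p2 := by
    apply continuous_pi
    intro i
    apply continuous_pi
    intro j
    show Continuous fun t => (δ t *ᵥ w i) j
    simp only [Matrix.mulVec, dotProduct]
    apply continuous_finset_sum
    intro k _
    apply Continuous.mul _ continuous_const
    have hγjk : Continuous fun m : Matrix (Fin d) (Fin d) ℝ => m j k :=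
      (continuous_apply k).comp (continuous_apply j)
    exact hγjk.comp (hγc.comp (continuous_const.sub continuous_id))
  -- glue
  refine ⟨fun t => if t ≤ 1/2 then p1 (2*t) else p2 (2*t - 1), ?_, ?_, ?_, ?_⟩
  · apply Continuous.continuousOn
    apply Continuous.if_le (hp1c.comp (by fun_prop)) (hp2c.comp (by fun_prop))
      continuous_id continuous_const
    intro a ha
    have ha' : a = 1/2 := ha
    rw [ha']
    norm_num
    exact hp20.symm
  · intro t _
    show (if t ≤ 1/2 then p1 (2*t) else p2 (2*t - 1)) ∈ SdSet n d Γ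
    by_cases h : t ≤ 1/2
    · rw [if_pos h]; exact hp1mem _
    · rw [if_neg h]; exact hp2mem _
  · norm_num
    exact hp10
  · norm_num
    exact hp21
end
end

section
/- Let Γ ⊆ Sym({1,…,n}) be a permutation group and d ≥ 1. Suppose v^1,…,v^k are normalized irreducible Γ-arrangements of n points, where v^j has dimension d_j ≥ d (i.e., v^j consists of points in ℝ^{d_j} with d_j ≥ d), and suppose that for all i ≠ j the representations of v^i and v^j are not isomorphic. Then d·k ≤ n, i.e., k ≤ n/d. -/
open Matrix

/-- Isomorphy of representations possibly living in different dimensions: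
an equivariant bijective linear map (forcing the dimensions to agree). -/
def IsoRepsDep {n e e' : ℕ} (Γ : Subgroup (Equiv.Perm (Fin n)))
    (T : Γ → Matrix (Fin e) (Fin e) ℝ) (T' : Γ → Matrix (Fin e') (Fin e') ℝ) : Prop :=
  ∃ R : (Fin e → ℝ) →ₗ[ℝ] (Fin e' → ℝ), Function.Bijective R ∧
    ∀ (φ : Γ) (x : Fin e → ℝ), R ((T φ).mulVec x) = (T' φ).mulVec (R x)

/-- Equivalence of arrangements possibly living in different dimensions:
a bijective linear map carrying one to the other (never holds across dimensions). -/
def AreEquivalentDep {n e e' : ℕ} (v : Fin n → Fin e → ℝ) (w : Fin n → Fin e' → ℝ) : Prop :=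
  ∃ X : (Fin e → ℝ) →ₗ[ℝ] (Fin e' → ℝ), Function.Bijective X ∧ ∀ i, X (v i) = w i


lemma myRepOne {n d : ℕ} {Γ : Subgroup (Equiv.Perm (Fin n))}
    {T : Γ → Matrix (Fin d) (Fin d) ℝ} (hT : IsRep Γ T) : T 1 = 1 := by
  have h1 : T 1 * T 1 = T 1 := by rw [← hT.2 1 1, one_mul]
  calc T 1 = ((T 1)ᵀ * T 1) * T 1 := by rw [hT.1 1, one_mul]
    _ = (T 1)ᵀ * (T 1 * T 1) := by rw [Matrix.mul_assoc]
    _ = (T 1)ᵀ * T 1 := by rw [h1]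
    _ = 1 := hT.1 1

lemma myRepInv {n d : ℕ} {Γ : Subgroup (Equiv.Perm (Fin n))}
    {T : Γ → Matrix (Fin d) (Fin d) ℝ} (hT : IsRep Γ T) (φ : Γ) : T φ⁻¹ = (T φ)ᵀ := by
  have h2 : T φ * (T φ)ᵀ = 1 := mul_eq_one_comm.mp (hT.1 φ)
  have h3 : T φ⁻¹ * T φ = 1 := by rw [← hT.2, inv_mul_cancel, myRepOne hT]
  calc T φ⁻¹ = T φ⁻¹ * (T φ * (T φ)ᵀ) := by rw [h2, mul_one]
    _ = (T φ⁻¹ * T φ) * (T φ)ᵀ := by rw [Matrix.mul_assoc]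
    _ = (T φ)ᵀ := by rw [h3, one_mul]

theorem stmt17 {n : ℕ} (Γ : Subgroup (Equiv.Perm (Fin n))) (d k : ℕ) (hd : 1 ≤ d)
    (dims : Fin k → ℕ) (hdims : ∀ j, d ≤ dims j)
    (v : (j : Fin k) → Fin n → Fin (dims j) → ℝ)
    (hnorm : ∀ j, IsNormalized (v j))
    (hrep : ∀ j, ∃ T : Γ → Matrix (Fin (dims j)) (Fin (dims j)) ℝ,
      IsRepOf Γ T (v j) ∧ IrredRep Γ T)
    (hnoniso : ∀ i j, i ≠ j →
      ∀ (T : Γ → Matrix (Fin (dims i)) (Fin (dims i)) ℝ)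
        (T' : Γ → Matrix (Fin (dims j)) (Fin (dims j)) ℝ),
        IsRepOf Γ T (v i) → IsRepOf Γ T' (v j) → ¬ IsoRepsDep Γ T T') :
    d * k ≤ n := by
    classical
  have hentry : ∀ (i j : Fin k) (a : Fin (dims j)) (b : Fin (dims i)),
      ((arrMat (v j))ᵀ * arrMat (v i)) a b = ∑ r, v j r a * v i r b := by
    intro i j a b
    simp [Matrix.mul_apply, arrMat]
  choose T hT hirr using hrep
  have horth : ∀ i j, i ≠ j → (arrMat (v j))ᵀ * arrMat (v i) = 0 := by
    intro i j hij
    set N := (arrMat (v j))ᵀ * arrMat (v i) with hNdef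
    have hNe : ∀ a b, N a b = ∑ r, v j r a * v i r b := by
      intro a b; rw [hNdef]; exact hentry i j a b
    have key : ∀ φ : Γ, T j φ * N = N * T i φ := by
      intro φ
      ext a b
      have hmid : ∀ r, v j (φ.val r) a = ∑ c, T j φ a c * v j r c := by
        intro r
        have h := congrFun ((hT j).2 φ r) a
        simpa [Matrix.mulVec, dotProduct] using h.symm
      have hmid2 : ∀ r, v i (φ.val⁻¹ r) b = ∑ c, (T i φ) c b * v i r c := by
        intro r
        have h := congrFun ((hT i).2 φ⁻¹ r) b
        rw [myRepInv (hT i).1 φ] at h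
        have h2 : ((φ⁻¹ : Γ) : Equiv.Perm (Fin n)) r = φ.val⁻¹ r := by simp
        rw [h2] at h
        simpa [Matrix.mulVec, dotProduct, Matrix.transpose_apply] using h.symm
      calc (T j φ * N) a b
          = ∑ c, T j φ a c * ∑ r, v j r c * v i r b := by
            simp only [Matrix.mul_apply, hNe]
        _ = ∑ c, ∑ r, T j φ a c * v j r c * v i r b := by
            refine Finset.sum_congr rfl fun c _ => ?_
            rw [Finset.mul_sum]
            exact Finset.sum_congr rfl fun r _ => by ring
        _ = ∑ r, (∑ c, T j φ a c * v j r c) * v i r b := by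
            rw [Finset.sum_comm]
            exact Finset.sum_congr rfl fun r _ => by rw [Finset.sum_mul]
        _ = ∑ r, v j (φ.val r) a * v i r b := by
            refine Finset.sum_congr rfl fun r _ => by rw [hmid]
        _ = ∑ r, v j r a * v i (φ.val⁻¹ r) b := by
            rw [← Equiv.sum_comp φ.val (fun r => v j r a * v i (φ.val⁻¹ r) b)]
            exact Finset.sum_congr rfl fun r _ => by rw [Equiv.Perm.inv_def, Equiv.symm_apply_apply]
        _ = ∑ r, ∑ c, v j r a * ((T i φ) c b * v i r c) := by
            refine Finset.sum_congr rfl fun r _ => ?_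
            rw [hmid2, Finset.mul_sum]
        _ = ∑ c, (∑ r, v j r a * v i r c) * (T i φ) c b := by
            rw [Finset.sum_comm]
            refine Finset.sum_congr rfl fun c _ => ?_
            rw [Finset.sum_mul]
            exact Finset.sum_congr rfl fun r _ => by ring
        _ = (N * T i φ) a b := by
            simp only [Matrix.mul_apply, hNe]
    by_contra hNne
    set R := N.mulVecLin with hRdef
    have hcomm : ∀ (φ : Γ) (x : Fin (dims i) → ℝ), R ((T i φ).mulVec x) = (T j φ).mulVec (R x) := by
      intro φ x
      simp only [hRdef, Matrix.mulVecLin_apply, Matrix.mulVec_mulVec, ← key φ]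
    have hzero_of : (∀ x, R x = 0) → False := by
      intro hz
      apply hNne
      ext a b
      have h := congrFun (hz (Pi.single b 1)) a
      simpa [hRdef, Matrix.mulVecLin_apply, Matrix.mulVec_single] using h
    have hker : LinearMap.ker R = ⊥ := by
      have hinv : ∀ (φ : Γ), ∀ x ∈ LinearMap.ker R, (T i φ).mulVec x ∈ LinearMap.ker R := by
        intro φ x hx
        simp only [LinearMap.mem_ker] at hx ⊢
        rw [hcomm φ x, hx, Matrix.mulVec_zero]
      rcases hirr i (LinearMap.ker R) hinv with h | h
      · exact h
      · exfalso
        apply hzero_of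
        intro x
        have hx : x ∈ LinearMap.ker R := h ▸ Submodule.mem_top
        exact LinearMap.mem_ker.mp hx
    have hrange : LinearMap.range R = ⊤ := by
      have hinv : ∀ (φ : Γ), ∀ y ∈ LinearMap.range R, (T j φ).mulVec y ∈ LinearMap.range R := by
        intro φ y hy
        obtain ⟨x, rfl⟩ := hy
        exact ⟨(T i φ).mulVec x, hcomm φ x⟩
      rcases hirr j (LinearMap.range R) hinv with h | h
      · exfalso
        apply hzero_of
        intro x
        have hx : R x ∈ LinearMap.range R := LinearMap.mem_range_self R x
        rw [h] at hx
        simpa using hx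
      · exact h
    exact hnoniso i j hij (T i) (T j) (hT i) (hT j)
      ⟨R, ⟨LinearMap.ker_eq_bot.mp hker, LinearMap.range_eq_top.mp hrange⟩, hcomm⟩
  set u : ((j : Fin k) × Fin (dims j)) → (Fin n → ℝ) := fun s r => v s.1 r s.2 with hu
  have hdot : ∀ s t : ((j : Fin k) × Fin (dims j)),
      ∑ r, u s r * u t r = if s = t then 1 else 0 := by
    rintro ⟨j, a⟩ ⟨i, b⟩
    by_cases hij : j = i
    · subst hij
      have h1 : ((arrMat (v j))ᵀ * arrMat (v j)) a b = (1 : Matrix (Fin (dims j)) (Fin (dims j)) ℝ) a b := by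
        rw [hnorm j]
      rw [hentry] at h1
      rw [hu]
      simp only []
      rw [h1, Matrix.one_apply]
      simp [Sigma.mk.inj_iff]
    · have h0 := horth i j (fun h => hij h.symm)
      have h1 : ((arrMat (v j))ᵀ * arrMat (v i)) a b = 0 := by rw [h0]; rfl
      rw [hentry] at h1
      rw [hu]
      simp only []
      rw [h1]
      simp [Sigma.mk.inj_iff, hij]
  have hli : LinearIndependent ℝ u := by
    rw [Fintype.linearIndependent_iff]
    intro g hg s
    have h2 : (0:ℝ) = ∑ t, g t * (if t = s then 1 else 0) := by
      calc (0:ℝ) = ∑ r, (∑ t, g t • u t) r * u s r := by rw [hg]; simp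
        _ = ∑ r, ∑ t, g t * (u t r * u s r) := by
            refine Finset.sum_congr rfl fun r _ => ?_
            simp only [Finset.sum_apply, Pi.smul_apply, smul_eq_mul]
            rw [Finset.sum_mul]
            exact Finset.sum_congr rfl fun t _ => by ring
        _ = ∑ t, ∑ r, g t * (u t r * u s r) := by rw [Finset.sum_comm]
        _ = ∑ t, g t * ∑ r, u t r * u s r := by
            exact Finset.sum_congr rfl fun t _ => by rw [Finset.mul_sum]
        _ = ∑ t, g t * (if t = s then 1 else 0) := by
            exact Finset.sum_congr rfl fun t _ => by rw [hdot]
    have h3 : ∑ t, g t * (if t = s then 1 else 0) = g s := by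
      simp [mul_ite]
    rw [h3] at h2
    exact h2.symm
  have hcard := hli.fintype_card_le_finrank
  rw [Module.finrank_fin_fun] at hcard
  have hsum : d * k ≤ Fintype.card ((j : Fin k) × Fin (dims j)) := by
    rw [Fintype.card_sigma]
    simp only [Fintype.card_fin]
    calc d * k = ∑ _j : Fin k, d := by simp [Finset.sum_const, mul_comm]
      _ ≤ ∑ j, dims j := Finset.sum_le_sum fun j _ => hdims j
  exact hsum.trans hcard
end

section
/- Let Γ ⊆ Sym({1,…,n}) be a permutation group and d ≥ 1. Suppose v^1,…,v^k are normalized irreducible rigid Γ-arrangements of n points, where v^j has dimension d_j ≥ d (i.e., v^j consists of points in ℝ^{d_j} with d_j ≥ d), and suppose that no two of them are equivalent (arrangements of different dimensions are never equivalent). Then d·k ≤ n, i.e., k ≤ n/d. -/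
open Matrix

namespace Stmt18Aux

open Matrix

/-- row-wise mulVec versus matrix product with transpose -/
lemma rows_mul_transpose {n p q : ℕ} (A : Matrix (Fin n) (Fin p) ℝ)
    (X : Matrix (Fin q) (Fin p) ℝ) (B : Matrix (Fin n) (Fin q) ℝ) :
    (∀ r, X.mulVec (A r) = B r) ↔ A * Xᵀ = B := by
  have key : ∀ r a, X.mulVec (A r) a = (A * Xᵀ) r a := by
    intro r a
    simp [Matrix.mulVec, dotProduct, Matrix.mul_apply, mul_comm]
  constructor
  · intro h; ext r a; rw [← key, h]
  · intro h r; funext a; rw [key, h]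

lemma submatrix_mul_left {n p q : ℕ} (A : Matrix (Fin n) (Fin p) ℝ)
    (B : Matrix (Fin p) (Fin q) ℝ) (φ : Equiv.Perm (Fin n)) :
    (A * B).submatrix φ id = A.submatrix φ id * B := by
  ext r c; simp [Matrix.mul_apply]

lemma perm_transpose_mul {n p q : ℕ} (A : Matrix (Fin n) (Fin p) ℝ)
    (B : Matrix (Fin n) (Fin q) ℝ) (φ : Equiv.Perm (Fin n)) :
    (A.submatrix φ id)ᵀ * (B.submatrix φ id) = Aᵀ * B := by
  ext a b
  simp only [Matrix.mul_apply, Matrix.transpose_apply, Matrix.submatrix_apply, id_eq]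
  exact Equiv.sum_comp φ (fun r => A r a * B r b)

lemma eq_one_of_mulVec {p : ℕ} (A : Matrix (Fin p) (Fin p) ℝ)
    (h : ∀ x, A.mulVec x = x) : A = 1 := by
  ext a b
  have := congrFun (h (Pi.single b 1)) a
  simp [Matrix.mulVec_single] at this
  simp [this, Matrix.one_apply, Pi.single_apply, eq_comm]

lemma eq_zero_of_mulVec {p q : ℕ} (A : Matrix (Fin q) (Fin p) ℝ)
    (h : ∀ x, A.mulVec x = 0) : A = 0 := by
  ext a b
  have := congrFun (h (Pi.single b 1)) a
  simpa [Matrix.mulVec_single] using this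

lemma comm_diag {e : ℕ} (X : Matrix (Fin e) (Fin e) ℝ) (μ : Fin e → ℝ) (f : ℝ → ℝ)
    (h : X * diagonal μ = diagonal μ * X) :
    X * diagonal (fun a => f (μ a)) = diagonal (fun a => f (μ a)) * X := by
  ext a b
  rw [Matrix.mul_diagonal, Matrix.diagonal_mul]
  have h' : X a b * μ b = μ a * X a b := by
    have := congrFun (congrFun h a) b
    rwa [Matrix.mul_diagonal, Matrix.diagonal_mul] at this
  rcases eq_or_ne (X a b) 0 with h0 | h0
  · simp [h0]
  · have hμ : μ b = μ a := by
      rw [mul_comm (μ a) (X a b)] at h'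
      exact mul_left_cancel₀ h0 h'
    rw [hμ, mul_comm]

lemma key {n e e' : ℕ} (Γ : Subgroup (Equiv.Perm (Fin n)))
    (M : Matrix (Fin n) (Fin e) ℝ) (N : Matrix (Fin n) (Fin e') ℝ)
    (hMn : Mᵀ * M = 1) (hNn : Nᵀ * N = 1)
    (T : Γ → Matrix (Fin e) (Fin e) ℝ)
    (hT : IsRepOf Γ T (fun r => M r)) (hTirr : IrredRep Γ T)
    (S : Γ → Matrix (Fin e') (Fin e') ℝ)
    (hS : IsRepOf Γ S (fun r => N r)) (hSirr : IrredRep Γ S)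
    (he : 1 ≤ e)
    (hrig : ∀ w : Fin n → Fin e → ℝ, DeformEquiv Γ (fun r => M r) w →
      AreEquivalent (fun r => M r) w)
    (hne : ¬ AreEquivalentDep (fun r => M r) (fun r => N r)) :
    Nᵀ * M = 0 := by
  classical
  obtain ⟨K, hKdef⟩ : ∃ K : Matrix (Fin e') (Fin e) ℝ, K = Nᵀ * M := ⟨_, rfl⟩
  obtain ⟨P, hPdef⟩ : ∃ P : Matrix (Fin n) (Fin n) ℝ, P = N * Nᵀ := ⟨_, rfl⟩
  obtain ⟨C, hCdef⟩ : ∃ C : Matrix (Fin e) (Fin e) ℝ, C = Kᵀ * K := ⟨_, rfl⟩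
  have hPsym : Pᵀ = P := by simp [hPdef]
  have hPP : P * P = P := by
    rw [hPdef, Matrix.mul_assoc, ← Matrix.mul_assoc Nᵀ N Nᵀ, hNn, Matrix.one_mul]
  have hMPM : Mᵀ * (P * M) = C := by
    simp only [hPdef, hCdef, hKdef, Matrix.transpose_mul, Matrix.transpose_transpose,
      Matrix.mul_assoc]
  have hPM_NK : P * M = N * K := by
    simp only [hPdef, hKdef, Matrix.mul_assoc]
  -- Hermitian / PSD data
  have hCher : C.IsHermitian := by
    have := Matrix.isHermitian_conjTranspose_mul_self K
    simpa [hCdef, Matrix.conjTranspose_eq_transpose_of_trivial] using this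
  have hCpsd : C.PosSemidef := by
    have := Matrix.posSemidef_conjTranspose_mul_self K
    simpa [hCdef, Matrix.conjTranspose_eq_transpose_of_trivial] using this
  obtain ⟨μ, hμdef⟩ : ∃ μ : Fin e → ℝ, μ = hCher.eigenvalues := ⟨_, rfl⟩
  have hμ0 : ∀ a, 0 ≤ μ a := by rw [hμdef]; exact fun a => hCpsd.eigenvalues_nonneg a
  obtain ⟨V, hV1, hV2, hVspec⟩ :
      ∃ V : Matrix (Fin e) (Fin e) ℝ, Vᵀ * V = 1 ∧ V * Vᵀ = 1 ∧
        C = V * diagonal μ * Vᵀ := by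
    rw [hμdef]
    refine ⟨hCher.eigenvectorUnitary, ?_, ?_, ?_⟩
    · have := Unitary.coe_star_mul_self hCher.eigenvectorUnitary
      simpa [Matrix.star_eq_conjTranspose, Matrix.conjTranspose_eq_transpose_of_trivial] using this
    · have := Unitary.coe_mul_star_self hCher.eigenvectorUnitary
      simpa [Matrix.star_eq_conjTranspose, Matrix.conjTranspose_eq_transpose_of_trivial] using this
    · have := hCher.spectral_theorem
      simpa [Matrix.star_eq_conjTranspose, Matrix.conjTranspose_eq_transpose_of_trivial] using this
  obtain ⟨conjV, hconjVdef⟩ : ∃ conjV : (Fin e → ℝ) → Matrix (Fin e) (Fin e) ℝ,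
      conjV = fun dg => V * diagonal dg * Vᵀ := ⟨_, rfl⟩
  have hconj_mul : ∀ dg dg', conjV dg * conjV dg' = conjV (fun a => dg a * dg' a) := by
    intro dg dg'
    simp only [hconjVdef]
    calc V * diagonal dg * Vᵀ * (V * diagonal dg' * Vᵀ)
        = V * diagonal dg * (Vᵀ * V) * (diagonal dg' * Vᵀ) := by
          simp only [Matrix.mul_assoc]
      _ = V * (diagonal dg * diagonal dg') * Vᵀ := by
          rw [hV1, Matrix.mul_one]; simp only [Matrix.mul_assoc]
      _ = V * diagonal (fun a => dg a * dg' a) * Vᵀ := by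
          rw [Matrix.diagonal_mul_diagonal]
  have hconj_one : conjV (fun _ => 1) = 1 := by
    simp only [hconjVdef]
    rw [show (diagonal fun _ => (1:ℝ)) = 1 from Matrix.diagonal_one, Matrix.mul_one, hV2]
  have hconj_sym : ∀ dg, (conjV dg)ᵀ = conjV dg := by
    intro dg
    simp [hconjVdef, Matrix.transpose_mul, Matrix.diagonal_transpose, Matrix.mul_assoc]
  have hspec' : ∀ g : ℝ, 1 + g • C = conjV (fun a => 1 + g * μ a) := by
    intro g
    have h1 : (1 : Matrix (Fin e) (Fin e) ℝ) = conjV (fun _ => 1) := hconj_one.symm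
    have h2 : g • C = conjV (fun a => g * μ a) := by
      have h3 : (fun a => g * μ a) = g • μ := rfl
      rw [hVspec, hconjVdef, h3]
      show g • (V * diagonal μ * Vᵀ) = V * diagonal (g • μ) * Vᵀ
      rw [Matrix.diagonal_smul]
      simp only [Matrix.smul_mul, Matrix.mul_smul]
    rw [h1, h2, hconjVdef]
    rw [← Matrix.add_mul, ← Matrix.mul_add, Matrix.diagonal_add]
  -- equivariance of K and commutation with C
  have hMperm : ∀ φ : Γ, M.submatrix (φ.val : Equiv.Perm (Fin n)) id = M * (T φ)ᵀ := by
    intro φ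
    refine ((rows_mul_transpose M (T φ) (M.submatrix (φ.val :) id)).mp ?_).symm
    intro r
    exact hT.2 φ r
  have hNperm : ∀ φ : Γ, N.submatrix (φ.val : Equiv.Perm (Fin n)) id = N * (S φ)ᵀ := by
    intro φ
    refine ((rows_mul_transpose N (S φ) (N.submatrix (φ.val :) id)).mp ?_).symm
    intro r
    exact hS.2 φ r
  have hKT : ∀ φ : Γ, (S φ)ᵀ * K = K * (T φ)ᵀ := by
    intro φ
    have h0 := perm_transpose_mul N M (φ.val : Equiv.Perm (Fin n))
    rw [hMperm φ, hNperm φ] at h0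
    -- h0 : (N * (S φ)ᵀ)ᵀ * (M * (T φ)ᵀ) = Nᵀ * M
    have h1 : S φ * (Nᵀ * (M * (T φ)ᵀ)) = Nᵀ * M := by
      rw [← h0]
      simp only [Matrix.transpose_mul, Matrix.transpose_transpose, Matrix.mul_assoc]
    calc (S φ)ᵀ * K = (S φ)ᵀ * (S φ * (Nᵀ * (M * (T φ)ᵀ))) := by rw [h1, hKdef]
      _ = ((S φ)ᵀ * S φ) * (Nᵀ * (M * (T φ)ᵀ)) := by simp only [Matrix.mul_assoc]
      _ = Nᵀ * (M * (T φ)ᵀ) := by rw [hS.1.1 φ, Matrix.one_mul]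
      _ = K * (T φ)ᵀ := by rw [hKdef, Matrix.mul_assoc]
  have hST : ∀ φ : Γ, S φ * K = K * T φ := by
    intro φ
    have hSS : S φ * (S φ)ᵀ = 1 := mul_eq_one_comm.mp (hS.1.1 φ)
    have hTT : (T φ)ᵀ * T φ = 1 := hT.1.1 φ
    have h1 : K = S φ * (K * (T φ)ᵀ) := by
      rw [← hKT φ, ← Matrix.mul_assoc, hSS, Matrix.one_mul]
    calc S φ * K = S φ * (K * ((T φ)ᵀ * T φ)) := by rw [hTT, Matrix.mul_one]
      _ = (S φ * (K * (T φ)ᵀ)) * T φ := by simp only [Matrix.mul_assoc]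
      _ = K * T φ := by rw [← h1]
  have hTC : ∀ φ : Γ, T φ * C = C * T φ := by
    intro φ
    have h1 : Kᵀ * S φ = T φ * Kᵀ := by
      have := congrArg Matrix.transpose (hKT φ)
      simpa [Matrix.transpose_mul, Matrix.transpose_transpose] using this
    calc T φ * C = T φ * Kᵀ * K := by rw [hCdef, Matrix.mul_assoc]
      _ = Kᵀ * S φ * K := by rw [← h1]
      _ = Kᵀ * (K * T φ) := by rw [Matrix.mul_assoc, hST φ]
      _ = C * T φ := by rw [hCdef, Matrix.mul_assoc]
  -- anything commuting with C commutes with conjV (f ∘ μ)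
  have hXdiag : ∀ (X : Matrix (Fin e) (Fin e) ℝ) (f : ℝ → ℝ), X * C = C * X →
      X * conjV (fun a => f (μ a)) = conjV (fun a => f (μ a)) * X := by
    intro X f hXC
    set Y := Vᵀ * (X * V) with hYdef
    have hXV : V * Y = X * V := by
      calc V * (Vᵀ * (X * V)) = (V * Vᵀ) * (X * V) := by simp only [Matrix.mul_assoc]
        _ = X * V := by rw [hV2, Matrix.one_mul]
    have hYV : Y * Vᵀ = Vᵀ * X := by
      calc (Vᵀ * (X * V)) * Vᵀ = Vᵀ * (X * (V * Vᵀ)) := by simp only [Matrix.mul_assoc]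
        _ = Vᵀ * X := by rw [hV2, Matrix.mul_one]
    have hD : diagonal μ = Vᵀ * (C * V) := by
      rw [hVspec]
      symm
      calc Vᵀ * (V * diagonal μ * Vᵀ * V)
          = (Vᵀ * V) * diagonal μ * (Vᵀ * V) := by simp only [Matrix.mul_assoc]
        _ = diagonal μ := by rw [hV1, Matrix.one_mul, Matrix.mul_one]
    have hYD : Y * diagonal μ = diagonal μ * Y := by
      rw [hD, hYdef]
      calc Vᵀ * (X * V) * (Vᵀ * (C * V))
          = Vᵀ * X * (V * Vᵀ) * (C * V) := by simp only [Matrix.mul_assoc]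
        _ = Vᵀ * (X * C) * V := by rw [hV2]; simp only [Matrix.mul_one, Matrix.mul_assoc]
        _ = Vᵀ * (C * X) * V := by rw [hXC]
        _ = Vᵀ * C * (V * Vᵀ) * (X * V) := by rw [hV2]; simp only [Matrix.mul_one, Matrix.mul_assoc]
        _ = Vᵀ * (C * V) * (Vᵀ * (X * V)) := by simp only [Matrix.mul_assoc]
    have hYdg := comm_diag Y μ f hYD
    rw [hconjVdef]
    show X * (V * diagonal (fun a => f (μ a)) * Vᵀ) = (V * diagonal (fun a => f (μ a)) * Vᵀ) * X
    calc X * (V * diagonal (fun a => f (μ a)) * Vᵀ)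
        = (X * V) * diagonal (fun a => f (μ a)) * Vᵀ := by simp only [Matrix.mul_assoc]
      _ = V * (Y * diagonal (fun a => f (μ a))) * Vᵀ := by rw [← hXV]; simp only [Matrix.mul_assoc]
      _ = V * (diagonal (fun a => f (μ a)) * Y) * Vᵀ := by rw [hYdg]
      _ = V * diagonal (fun a => f (μ a)) * (Y * Vᵀ) := by simp only [Matrix.mul_assoc]
      _ = V * diagonal (fun a => f (μ a)) * Vᵀ * X := by rw [hYV]; simp only [Matrix.mul_assoc]
  -- the deformation
  obtain ⟨R, hRdef⟩ : ∃ R : ℝ → Matrix (Fin e) (Fin e) ℝ,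
      R = fun t => conjV (fun a => (Real.sqrt (1 + (2*t^2 + t^4) * μ a))⁻¹) := ⟨_, rfl⟩
  obtain ⟨c, hcdef⟩ : ∃ c : ℝ → Matrix (Fin n) (Fin e) ℝ,
      c = fun t => (1 + t^2 • P) * M * R t := ⟨_, rfl⟩
  have hRt : ∀ t : ℝ, R t = conjV (fun a => (Real.sqrt (1 + (2*t^2 + t^4) * μ a))⁻¹) := by
    intro t; rw [hRdef]
  have hct : ∀ t : ℝ, c t = (1 + t^2 • P) * M * R t := by
    intro t; rw [hcdef]
  have hq : ∀ (t : ℝ) (a : Fin e), 0 < 1 + (2*t^2 + t^4) * μ a := by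
    intro t a
    have h0 : 0 ≤ 2*t^2 + t^4 := by positivity
    have := mul_nonneg h0 (hμ0 a)
    linarith
  have hsq : ∀ (t : ℝ) (a : Fin e), Real.sqrt (1 + (2*t^2 + t^4) * μ a) ≠ 0 := by
    intro t a
    exact ne_of_gt (Real.sqrt_pos.mpr (hq t a))
  have hCsym : Cᵀ = C := by
    rw [hCdef, Matrix.transpose_mul, Matrix.transpose_transpose]
  have hRsym : ∀ t, (R t)ᵀ = R t := by intro t; rw [hRdef]; exact hconj_sym _
  have hRcomm : ∀ (t : ℝ) (X : Matrix (Fin e) (Fin e) ℝ), X * C = C * X →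
      X * R t = R t * X := by
    intro t X hX
    rw [hRdef]
    exact hXdiag X (fun x => (Real.sqrt (1 + (2*t^2 + t^4) * x))⁻¹) hX
  have hTCt : ∀ φ : Γ, (T φ)ᵀ * C = C * (T φ)ᵀ := by
    intro φ
    have := congrArg Matrix.transpose (hTC φ)
    rw [Matrix.transpose_mul, Matrix.transpose_mul, hCsym] at this
    exact this.symm
  have hTR : ∀ (φ : Γ) (t : ℝ), T φ * R t = R t * T φ := fun φ t => hRcomm t _ (hTC φ)
  have hTRt : ∀ (φ : Γ) (t : ℝ), (T φ)ᵀ * R t = R t * (T φ)ᵀ := fun φ t => hRcomm t _ (hTCt φ)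
  -- normalization along the path
  have hBB : ∀ t : ℝ, (1 + t^2 • P) * (1 + t^2 • P) = 1 + (2*t^2 + t^4) • P := by
    intro t
    have h1 : (t^2 • P) * (t^2 • P) = (t^2 * t^2) • P := by
      rw [Matrix.smul_mul, Matrix.mul_smul, hPP, smul_smul]
    have h2 : (2*t^2 + t^4) • P = t^2 • P + (t^2 • P + (t^2*t^2) • P) := by
      rw [← add_smul, ← add_smul]
      congr 1
      ring
    simp only [Matrix.add_mul, Matrix.mul_add, Matrix.one_mul, Matrix.mul_one]
    rw [h1, h2, add_assoc]
  have hMBBM : ∀ t : ℝ, Mᵀ * ((1 + (2*t^2 + t^4) • P) * M) = 1 + (2*t^2 + t^4) • C := by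
    intro t
    rw [Matrix.add_mul, Matrix.one_mul, Matrix.smul_mul, Matrix.mul_add, Matrix.mul_smul, hMn,
      hMPM]
  have hnorm : ∀ t : ℝ, (c t)ᵀ * c t = 1 := by
    intro t
    rw [hcdef]
    show ((1 + t^2 • P) * M * R t)ᵀ * ((1 + t^2 • P) * M * R t) = 1
    have hBt : (1 + t^2 • P)ᵀ = 1 + t^2 • P := by
      rw [Matrix.transpose_add, Matrix.transpose_one, Matrix.transpose_smul, hPsym]
    rw [Matrix.transpose_mul, Matrix.transpose_mul, hBt, hRsym]
    calc R t * (Mᵀ * (1 + t^2 • P)) * ((1 + t^2 • P) * M * R t)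
        = R t * (Mᵀ * (((1 + t^2 • P) * (1 + t^2 • P)) * M)) * R t := by
          simp only [Matrix.mul_assoc]
      _ = R t * (Mᵀ * ((1 + (2*t^2 + t^4) • P) * M)) * R t := by rw [hBB t]
      _ = R t * (1 + (2*t^2 + t^4) • C) * R t := by rw [hMBBM t]
      _ = conjV (fun a => (Real.sqrt (1 + (2*t^2 + t^4) * μ a))⁻¹)
            * conjV (fun a => 1 + (2*t^2 + t^4) * μ a)
            * conjV (fun a => (Real.sqrt (1 + (2*t^2 + t^4) * μ a))⁻¹) := by
          rw [hspec' (2*t^2 + t^4)]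
          rw [hRt t]
      _ = conjV (fun a => (Real.sqrt (1 + (2*t^2 + t^4) * μ a))⁻¹
            * (1 + (2*t^2 + t^4) * μ a)
            * (Real.sqrt (1 + (2*t^2 + t^4) * μ a))⁻¹) := by
          rw [hconj_mul, hconj_mul]
      _ = conjV (fun _ => 1) := by
          have hfun : (fun a => (Real.sqrt (1 + (2*t^2 + t^4) * μ a))⁻¹
              * (1 + (2*t^2 + t^4) * μ a)
              * (Real.sqrt (1 + (2*t^2 + t^4) * μ a))⁻¹) = fun _ => (1:ℝ) := by
            funext a
            rw [← Real.mul_self_sqrt (le_of_lt (hq t a))]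
            have hne0 := hsq t a
            field_simp
            rw [Real.sq_sqrt (sq_nonneg _)]
            exact div_self (pow_ne_zero 2 (by convert hne0 using 2; ring))
          rw [hfun]
      _ = 1 := hconj_one
  -- alternative form of c and Γ-equivariance
  have hPMrw : ∀ t : ℝ, c t = M * R t + t^2 • (N * (K * R t)) := by
    intro t
    rw [hct t]
    have h1 : (1 + t^2 • P) * M = M + t^2 • (N * K) := by
      rw [Matrix.add_mul, Matrix.one_mul, Matrix.smul_mul, hPM_NK]
    rw [h1, Matrix.add_mul, Matrix.smul_mul, Matrix.mul_assoc]
  have hmemt : ∀ t : ℝ, (fun r => c t r) ∈ SdSet n e Γ := by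
    intro t
    constructor
    · show ((Matrix.of fun r => c t r)ᵀ * Matrix.of fun r => c t r) = 1
      exact hnorm t
    · refine ⟨T, ⟨hT.1, ?_⟩⟩
      intro φ r
      have hmat : c t * (T φ)ᵀ = (c t).submatrix (φ.val : Equiv.Perm (Fin n)) id := by
        rw [hPMrw t]
        have hsub : (M * R t + t^2 • (N * (K * R t))).submatrix
              (φ.val : Equiv.Perm (Fin n)) id
            = (M * (T φ)ᵀ) * R t + t^2 • ((N * (S φ)ᵀ) * (K * R t)) := by
          rw [Matrix.submatrix_add, Matrix.submatrix_smul]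
          show (M * R t).submatrix _ id + t^2 • ((N * (K * R t)).submatrix _ id) = _
          rw [submatrix_mul_left, submatrix_mul_left, hMperm φ, hNperm φ]
        rw [hsub, Matrix.add_mul, Matrix.smul_mul]
        congr 1
        · calc (M * R t) * (T φ)ᵀ = M * (R t * (T φ)ᵀ) := by rw [Matrix.mul_assoc]
            _ = M * ((T φ)ᵀ * R t) := by rw [hTRt φ t]
            _ = (M * (T φ)ᵀ) * R t := by rw [Matrix.mul_assoc]
        · congr 1
          calc (N * (K * R t)) * (T φ)ᵀ = N * (K * (R t * (T φ)ᵀ)) := by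
                simp only [Matrix.mul_assoc]
            _ = N * (K * ((T φ)ᵀ * R t)) := by rw [hTRt φ t]
            _ = N * ((K * (T φ)ᵀ) * R t) := by simp only [Matrix.mul_assoc]
            _ = N * (((S φ)ᵀ * K) * R t) := by rw [hKT φ]
            _ = (N * (S φ)ᵀ) * (K * R t) := by simp only [Matrix.mul_assoc]
      have hrows := (rows_mul_transpose (c t) (T φ)
        ((c t).submatrix (φ.val : Equiv.Perm (Fin n)) id)).mpr hmat
      exact hrows r
  -- continuity
  have hcont : Continuous c := by
    rw [hcdef]
    refine Continuous.matrix_mul (Continuous.matrix_mul ?_ continuous_const) ?_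
    · exact continuous_const.add ((continuous_pow 2).smul continuous_const)
    · rw [hRdef, hconjVdef]
      refine Continuous.matrix_mul (Continuous.matrix_mul continuous_const ?_) continuous_const
      refine Continuous.matrix_diagonal ?_
      refine continuous_pi ?_
      intro a
      refine Continuous.inv₀ ?_ (fun t => hsq t a)
      have hgc : Continuous fun t : ℝ => (2*t^2 + t^4) * μ a :=
        ((continuous_const.mul (continuous_pow 2)).add (continuous_pow 4)).mul continuous_const
      exact Real.continuous_sqrt.comp (continuous_const.add hgc)
  -- endpoints
  have hR0 : R 0 = 1 := by
    rw [hRt 0]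
    have : (fun a => (Real.sqrt (1 + (2*(0:ℝ)^2 + 0^4) * μ a))⁻¹) = fun _ => (1:ℝ) := by
      funext a; norm_num
    rw [this, hconj_one]
  have hc0 : c 0 = M := by
    rw [hct 0, hR0, Matrix.mul_one]
    norm_num
  obtain ⟨R', hR'def⟩ : ∃ R' : Matrix (Fin e) (Fin e) ℝ,
      R' = conjV (fun a => Real.sqrt (1 + (2*(1:ℝ)^2 + 1^4) * μ a)) := ⟨_, rfl⟩
  have hRR' : R 1 * R' = 1 := by
    rw [hRt 1, hR'def, hconj_mul]
    have : (fun a => (Real.sqrt (1 + (2*(1:ℝ)^2 + 1^4) * μ a))⁻¹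
        * Real.sqrt (1 + (2*(1:ℝ)^2 + 1^4) * μ a)) = fun _ => (1:ℝ) := by
      funext a; exact inv_mul_cancel₀ (hsq 1 a)
    rw [this, hconj_one]
  -- rigidity
  have hdef : DeformEquiv Γ (fun r => M r) (fun r => c 1 r) :=
    ⟨c, hcont.continuousOn, fun t _ => hmemt t, hc0, rfl⟩
  obtain ⟨X, -, hX⟩ := hrig (fun r => c 1 r) hdef
  have hc1X : M * Xᵀ = c 1 := (rows_mul_transpose M X (c 1)).mp hX
  have h5 : (1 + P) * M = M * (Xᵀ * R') := by
    have e1 : c 1 = (1 + P) * M * R 1 := by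
      rw [hct 1]; norm_num
    calc (1 + P) * M = (1 + P) * M * (R 1 * R') := by rw [hRR', Matrix.mul_one]
      _ = c 1 * R' := by rw [e1]; simp only [Matrix.mul_assoc]
      _ = M * Xᵀ * R' := by rw [hc1X]
      _ = M * (Xᵀ * R') := by rw [Matrix.mul_assoc]
  have h6 : Xᵀ * R' = 1 + C := by
    calc Xᵀ * R' = (Mᵀ * M) * (Xᵀ * R') := by rw [hMn, Matrix.one_mul]
      _ = Mᵀ * ((1 + P) * M) := by rw [Matrix.mul_assoc, ← h5]
      _ = Mᵀ * (M + P * M) := by rw [Matrix.add_mul, Matrix.one_mul]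
      _ = 1 + C := by rw [Matrix.mul_add, hMn, hMPM]
  have hPMC : P * M = M * C := by
    have h7 : M + P * M = M + M * C := by
      calc M + P * M = (1 + P) * M := by rw [Matrix.add_mul, Matrix.one_mul]
        _ = M * (Xᵀ * R') := h5
        _ = M * (1 + C) := by rw [h6]
        _ = M + M * C := by rw [Matrix.mul_add, Matrix.mul_one]
    exact add_left_cancel h7
  have hCC : C * C = C := by
    have h7 : M * (C * C) = M * C := by
      calc M * (C * C) = (M * C) * C := by rw [Matrix.mul_assoc]
        _ = (P * M) * C := by rw [hPMC]
        _ = P * (M * C) := by rw [Matrix.mul_assoc]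
        _ = P * (P * M) := by rw [hPMC]
        _ = (P * P) * M := by rw [Matrix.mul_assoc]
        _ = M * C := by rw [hPP, hPMC]
    calc C * C = (Mᵀ * M) * (C * C) := by rw [hMn, Matrix.one_mul]
      _ = Mᵀ * (M * (C * C)) := by rw [Matrix.mul_assoc]
      _ = Mᵀ * (M * C) := by rw [h7]
      _ = (Mᵀ * M) * C := by rw [Matrix.mul_assoc]
      _ = C := by rw [hMn, Matrix.one_mul]
  -- case analysis on the fixed space of C
  have hWmem : ∀ x, x ∈ LinearMap.ker (C.mulVecLin - LinearMap.id) ↔ C.mulVec x = x := by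
    intro x
    rw [LinearMap.mem_ker, LinearMap.sub_apply, LinearMap.id_apply, sub_eq_zero,
      Matrix.mulVecLin_apply]
  have hinv : ∀ (φ : Γ), ∀ x ∈ LinearMap.ker (C.mulVecLin - LinearMap.id),
      (T φ).mulVec x ∈ LinearMap.ker (C.mulVecLin - LinearMap.id) := by
    intro φ x hx
    rw [hWmem] at hx ⊢
    calc C.mulVec ((T φ).mulVec x) = (C * T φ).mulVec x := Matrix.mulVec_mulVec x C (T φ)
      _ = (T φ * C).mulVec x := by rw [← hTC φ]
      _ = (T φ).mulVec (C.mulVec x) := (Matrix.mulVec_mulVec x (T φ) C).symm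
      _ = (T φ).mulVec x := by rw [hx]
  rcases hTirr _ hinv with hbot | htop
  · -- C = 0, hence K = 0
    have hC0 : C = 0 := by
      apply eq_zero_of_mulVec
      intro x
      have hx : C.mulVec x ∈ LinearMap.ker (C.mulVecLin - LinearMap.id) := by
        rw [hWmem, Matrix.mulVec_mulVec, hCC]
      rw [hbot] at hx
      simpa using hx
    have hK0 : K = 0 := by
      ext r b
      have h8 : (Kᵀ * K) b b = 0 := by rw [← hCdef, hC0]; simp
      rw [Matrix.mul_apply] at h8
      have h9 : ∀ r' ∈ (Finset.univ : Finset (Fin e')), (0:ℝ) ≤ K r' b * K r' b :=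
        fun r' _ => mul_self_nonneg _
      have h10 : ∀ r' ∈ (Finset.univ : Finset (Fin e')), K r' b * K r' b = 0 := by
        rw [← Finset.sum_eq_zero_iff_of_nonneg h9]
        simpa [Matrix.transpose_apply] using h8
      have := h10 r (Finset.mem_univ r)
      simpa using mul_self_eq_zero.mp this
    rw [← hKdef, hK0]
  · -- C = 1, contradiction with non-equivalence
    exfalso
    have hCmul1 : ∀ x, C.mulVec x = x := by
      intro x
      have hx : x ∈ LinearMap.ker (C.mulVecLin - LinearMap.id) := by
        rw [htop]; exact Submodule.mem_top
      exact (hWmem x).mp hx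
    have hC1 : C = 1 := eq_one_of_mulVec C hCmul1
    have hKtK : Kᵀ * K = 1 := by rw [← hCdef, hC1]
    have hNK : N * K = M := by rw [← hPM_NK, hPMC, hC1, Matrix.mul_one]
    have hinv2 : ∀ (φ : Γ), ∀ x ∈ LinearMap.range (Matrix.mulVecLin K),
        (S φ).mulVec x ∈ LinearMap.range (Matrix.mulVecLin K) := by
      intro φ x hx
      obtain ⟨y, hy⟩ := hx
      refine ⟨(T φ).mulVec y, ?_⟩
      rw [Matrix.mulVecLin_apply] at hy ⊢
      rw [Matrix.mulVec_mulVec, ← hST φ, ← Matrix.mulVec_mulVec, hy]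
    rcases hSirr _ hinv2 with h2bot | h2top
    · have hK0 : K = 0 := by
        apply eq_zero_of_mulVec
        intro x
        have hx : K.mulVec x ∈ LinearMap.range (Matrix.mulVecLin K) :=
          ⟨x, Matrix.mulVecLin_apply K x⟩
        rw [h2bot] at hx
        simpa using hx
      have h11 : (1 : Matrix (Fin e) (Fin e) ℝ) = 0 := by rw [← hKtK, hK0]; simp
      have h12 := congrFun (congrFun h11 ⟨0, he⟩) ⟨0, he⟩
      simp [Matrix.one_apply] at h12
    · have hsurj : Function.Surjective (Matrix.mulVecLin K) := by
        intro z
        have hz : z ∈ LinearMap.range (Matrix.mulVecLin K) := by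
          rw [h2top]; exact Submodule.mem_top
        exact hz
      have hKKt : K * Kᵀ = 1 := by
        apply eq_one_of_mulVec
        intro z
        obtain ⟨y, hy⟩ := hsurj z
        rw [Matrix.mulVecLin_apply] at hy
        calc (K * Kᵀ).mulVec z = (K * Kᵀ).mulVec (K.mulVec y) := by rw [hy]
          _ = ((K * Kᵀ) * K).mulVec y := Matrix.mulVec_mulVec y (K * Kᵀ) K
          _ = (K * (Kᵀ * K)).mulVec y := by rw [Matrix.mul_assoc]
          _ = K.mulVec y := by rw [hKtK, Matrix.mul_one]
          _ = z := hy
      apply hne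
      refine ⟨Matrix.mulVecLin K, ⟨?_, hsurj⟩, ?_⟩
      · intro x y hxy
        simp only [Matrix.mulVecLin_apply] at hxy
        have h13 : (Kᵀ * K).mulVec x = (Kᵀ * K).mulVec y := by
          rw [← Matrix.mulVec_mulVec, ← Matrix.mulVec_mulVec, hxy]
        rwa [hKtK, Matrix.one_mulVec, Matrix.one_mulVec] at h13
      · intro r
        have hNrow : ∀ r, Kᵀ.mulVec (N r) = M r :=
          (rows_mul_transpose N Kᵀ M).mpr
            (by rw [Matrix.transpose_transpose]; exact hNK)
        show K.mulVec (M r) = N r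
        rw [← hNrow r, Matrix.mulVec_mulVec, hKKt, Matrix.one_mulVec]

end Stmt18Aux

theorem stmt18 {n : ℕ} (Γ : Subgroup (Equiv.Perm (Fin n))) (d k : ℕ) (hd : 1 ≤ d)
    (dims : Fin k → ℕ) (hdims : ∀ j, d ≤ dims j)
    (v : (j : Fin k) → Fin n → Fin (dims j) → ℝ)
    (hmem : ∀ j, v j ∈ SdSet n (dims j) Γ)
    (hirr : ∀ j, ∃ T : Γ → Matrix (Fin (dims j)) (Fin (dims j)) ℝ,
      IsRepOf Γ T (v j) ∧ IrredRep Γ T)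
    (hrigid : ∀ j, ∀ w : Fin n → Fin (dims j) → ℝ,
      DeformEquiv Γ (v j) w → AreEquivalent (v j) w)
    (hnoneq : ∀ i j, i ≠ j → ¬ AreEquivalentDep (v i) (v j)) :
    d * k ≤ n := by
  classical
  have horth : ∀ i j : Fin k, i ≠ j →
      (arrMat (v j))ᵀ * arrMat (v i) = 0 := by
    intro i j hij
    obtain ⟨T, hT, hTirr⟩ := hirr i
    obtain ⟨S, hS, hSirr⟩ := hirr j
    exact Stmt18Aux.key Γ (arrMat (v i)) (arrMat (v j)) (hmem i).1 (hmem j).1 T hT hTirr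
      S hS hSirr (le_trans hd (hdims i)) (hrigid i) (hnoneq i j hij)
  let B : Matrix (Fin n) ((j : Fin k) × Fin (dims j)) ℝ := fun r s => v s.1 r s.2
  have hBtB : Bᵀ * B = 1 := by
    ext s s'
    rcases s with ⟨j, a⟩
    rcases s' with ⟨j', b⟩
    rw [Matrix.mul_apply]
    by_cases hjj : j = j'
    · subst hjj
      have h1 : ((arrMat (v j))ᵀ * arrMat (v j)) a b
          = (1 : Matrix (Fin (dims j)) (Fin (dims j)) ℝ) a b := by rw [(hmem j).1]
      rw [Matrix.mul_apply] at h1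
      simp only [Matrix.transpose_apply] at h1
      have h2 : ∑ r, Bᵀ ⟨j,a⟩ r * B r ⟨j,b⟩ = ∑ x, arrMat (v j) x a * arrMat (v j) x b := rfl
      rw [h2, h1]
      by_cases hab : a = b
      · subst hab; simp [Matrix.one_apply]
      · rw [Matrix.one_apply_ne hab, Matrix.one_apply_ne (by simp [Sigma.ext_iff, hab])]
    · have h1 : ((arrMat (v j))ᵀ * arrMat (v j')) a b = 0 :=
        congrFun (congrFun (horth j' j (fun h => hjj h.symm)) a) b
      rw [Matrix.mul_apply] at h1
      simp only [Matrix.transpose_apply] at h1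
      have h2 : ∑ r, Bᵀ ⟨j,a⟩ r * B r ⟨j',b⟩ = ∑ x, arrMat (v j) x a * arrMat (v j') x b := rfl
      rw [h2, h1, Matrix.one_apply_ne (by simp [Sigma.ext_iff, hjj])]
  have hinj : Function.Injective B.mulVecLin := by
    intro x y hxy
    simp only [Matrix.mulVecLin_apply] at hxy
    have h3 : (Bᵀ * B).mulVec x = (Bᵀ * B).mulVec y := by
      rw [← Matrix.mulVec_mulVec, ← Matrix.mulVec_mulVec, hxy]
    rwa [hBtB, Matrix.one_mulVec, Matrix.one_mulVec] at h3
  have hrank := LinearMap.finrank_le_finrank_of_injective hinj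
  rw [Module.finrank_pi ℝ, Module.finrank_pi ℝ, Fintype.card_fin] at hrank
  have hcard : Fintype.card ((j : Fin k) × Fin (dims j)) = ∑ j, dims j := by
    simp [Fintype.card_sigma]
  calc d * k = ∑ _j : Fin k, d := by
        rw [Finset.sum_const, Finset.card_univ, Fintype.card_fin, smul_eq_mul, mul_comm]
    _ ≤ ∑ j, dims j := Finset.sum_le_sum (fun j _ => hdims j)
    _ = Fintype.card ((j : Fin k) × Fin (dims j)) := hcard.symm
    _ ≤ n := hrank
end
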